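/- arXiv:0809.0088 — 2 statements merged into one kernel-verified Lean document; each statement's English description precedes it below -/
import Mathlib

section
/- For any d-polytope P, the sum over all i with i even of f_i(P) equals the sum over all i with i odd of f_i(P), where the improper faces are counted, i.e., f_{-1}(P) = f_d(P) = 1. Equivalently, the number of faces of P of even dimension (including the empty face of dimension -1 counted as odd index -1, so counted among dimensions congruent to 1 mod 2) equals the number of faces of odd dimension. -/
open Set Module Bornology Filter Metric
open scoped Topology

set_option linter.unusedVariables false
set_option linter.unusedSectionVars false
set_option maxHeartbeats 1000000

noncomputable section


section Helpers

variable {E E' : Type} [NormedAddCommGroup E] [NormedSpace ℝ E]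
  [NormedAddCommGroup E'] [NormedSpace ℝ E']

lemma affineSpan_linear_image (f : E →ₗ[ℝ] E') (s : Set E) :
    (affineSpan ℝ (f '' s) : Set E') = f '' (affineSpan ℝ s : Set E) := by
  have hc : ⇑f = ⇑f.toAffineMap := rfl
  rw [hc, ← AffineSubspace.map_span f.toAffineMap s]
  rfl

lemma vectorSpan_linear_image (f : E →ₗ[ℝ] E') (s : Set E) :
    vectorSpan ℝ (f '' s) = (vectorSpan ℝ s).map f := by
  have hc : ⇑f = ⇑f.toAffineMap := rfl
  rw [← direction_affineSpan, ← direction_affineSpan, hc,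
    ← AffineSubspace.map_span f.toAffineMap s, AffineSubspace.map_direction]
  rfl

/-- relatively open set -/
def RelOpen (U : Set E) : Prop :=
  ∃ V : Set E, IsOpen V ∧ U = (affineSpan ℝ U : Set E) ∩ V

lemma relOpen_iff_balls {U : Set E} :
    RelOpen U ↔ ∀ x ∈ U, ∃ ε > 0, ∀ y ∈ (affineSpan ℝ U : Set E), dist y x < ε → y ∈ U := by
  constructor
  · rintro ⟨V, hV, hUV⟩ x hx
    have hxV : x ∈ V := (hUV ▸ hx).2
    obtain ⟨ε, hε, hball⟩ := Metric.isOpen_iff.1 hV x hxV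
    exact ⟨ε, hε, fun y hy hdy => hUV ▸ ⟨hy, hball (by simpa [Metric.mem_ball] using hdy)⟩⟩
  · intro h
    choose! ε hε hb using h
    refine ⟨⋃ x ∈ U, Metric.ball x (ε x), isOpen_biUnion fun x _ => Metric.isOpen_ball, ?_⟩
    apply Set.Subset.antisymm
    · intro x hx
      exact ⟨subset_affineSpan ℝ U hx, Set.mem_biUnion hx (Metric.mem_ball_self (hε x hx))⟩
    · intro y hy
      obtain ⟨hysp, hyb⟩ := hy
      simp only [Set.mem_iUnion] at hyb
      obtain ⟨x, hxU, hyx⟩ := hyb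
      exact hb x hxU y hysp (Metric.mem_ball.1 hyx)

/-- The class of sets used in the valuation argument, with their Euler weight. -/
def GoodPair (U : Set E) (w : ℝ) : Prop :=
  U.Nonempty ∧ Convex ℝ U ∧ IsBounded U ∧
    ((IsClosed U ∧ w = 1) ∨ (RelOpen U ∧ w = (-1) ^ (finrank ℝ (vectorSpan ℝ U))))

lemma GoodPair.image (e : E ≃L[ℝ] E') {U : Set E} {w : ℝ} (h : GoodPair U w) :
    GoodPair (e '' U) w := by
  obtain ⟨hne, hconv, hbd, hcase⟩ := h
  have hlin : (⇑e '' U) = ⇑(e.toLinearEquiv.toLinearMap) '' U := rfl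
  refine ⟨hne.image _, ?_, ?_, ?_⟩
  · exact hconv.linear_image e.toLinearEquiv.toLinearMap
  · exact (e : E →L[ℝ] E').lipschitz.isBounded_image hbd
  · rcases hcase with ⟨hcl, hw⟩ | ⟨hro, hw⟩
    · exact Or.inl ⟨e.toHomeomorph.isClosedMap U hcl, hw⟩
    · refine Or.inr ⟨?_, ?_⟩
      · obtain ⟨V, hV, hUV⟩ := hro
        refine ⟨e '' V, e.toHomeomorph.isOpenMap V hV, ?_⟩
        rw [hlin, affineSpan_linear_image]
        have : (⇑e.toLinearEquiv.toLinearMap '' (affineSpan ℝ U : Set E)) ∩ (⇑e '' V)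
            = ⇑e '' ((affineSpan ℝ U : Set E) ∩ V) := (Set.image_inter e.injective).symm
        rw [this, ← hUV]
        exact hlin.symm
      · rw [hw, hlin, vectorSpan_linear_image,
          LinearEquiv.finrank_map_eq e.toLinearEquiv (vectorSpan ℝ U)]

end Helpers



section OneDim

lemma tendsto_indicator_Icc (a b t : ℝ) :
    Tendsto (Set.indicator (Icc a b) (fun _ => (1:ℝ))) (𝓝[>] t)
      (𝓝 (Set.indicator (Ico a b) (fun _ => (1:ℝ)) t)) := by
  by_cases h1 : t < a
  · have hmem : Ioo t a ∈ 𝓝[>] t := Ioo_mem_nhdsGT h1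
    have heq : Set.indicator (Icc a b) (fun _ => (1:ℝ)) =ᶠ[𝓝[>] t] fun _ => 0 := by
      filter_upwards [hmem] with s hs
      exact Set.indicator_of_notMem (fun hc => absurd hc.1 (not_le.2 hs.2)) _
    rw [Set.indicator_of_notMem (fun hc => absurd hc.1 (not_le.2 h1)) _]
    exact (tendsto_const_nhds).congr' heq.symm
  · by_cases h2 : t < b
    · have hmem : Ioo t b ∈ 𝓝[>] t := Ioo_mem_nhdsGT h2
      have heq : Set.indicator (Icc a b) (fun _ => (1:ℝ)) =ᶠ[𝓝[>] t] fun _ => 1 := by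
        filter_upwards [hmem] with s hs
        exact Set.indicator_of_mem (Set.mem_Icc.mpr ⟨le_of_lt (lt_of_le_of_lt (not_lt.1 h1) hs.1), le_of_lt hs.2⟩) _
      rw [Set.indicator_of_mem (Set.mem_Ico.mpr ⟨not_lt.1 h1, h2⟩)]
      exact (tendsto_const_nhds).congr' heq.symm
    · have hmem : Ioi t ∈ 𝓝[>] t := self_mem_nhdsWithin
      have heq : Set.indicator (Icc a b) (fun _ => (1:ℝ)) =ᶠ[𝓝[>] t] fun _ => 0 := by
        filter_upwards [hmem] with s hs
        exact Set.indicator_of_notMem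
          (fun hc => absurd hc.2 (not_le.2 (lt_of_le_of_lt (not_lt.1 h2) hs))) _
      rw [Set.indicator_of_notMem (fun hc => absurd h2 (not_not_intro (lt_of_lt_of_le hc.2 (le_refl b))))]
      exact (tendsto_const_nhds).congr' heq.symm

lemma tendsto_indicator_Ioo (a b t : ℝ) :
    Tendsto (Set.indicator (Ioo a b) (fun _ => (1:ℝ))) (𝓝[>] t)
      (𝓝 (Set.indicator (Ico a b) (fun _ => (1:ℝ)) t)) := by
  by_cases h1 : t < a
  · have hmem : Ioo t a ∈ 𝓝[>] t := Ioo_mem_nhdsGT h1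
    have heq : Set.indicator (Ioo a b) (fun _ => (1:ℝ)) =ᶠ[𝓝[>] t] fun _ => 0 := by
      filter_upwards [hmem] with s hs
      exact Set.indicator_of_notMem (fun hc => absurd hc.1 (not_lt.2 (le_of_lt hs.2))) _
    rw [Set.indicator_of_notMem (fun hc => absurd hc.1 (not_le.2 h1)) _]
    exact (tendsto_const_nhds).congr' heq.symm
  · by_cases h2 : t < b
    · have hmem : Ioo t b ∈ 𝓝[>] t := Ioo_mem_nhdsGT h2
      have heq : Set.indicator (Ioo a b) (fun _ => (1:ℝ)) =ᶠ[𝓝[>] t] fun _ => 1 := by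
        filter_upwards [hmem] with s hs
        exact Set.indicator_of_mem (Set.mem_Ioo.mpr ⟨lt_of_le_of_lt (not_lt.1 h1) hs.1, hs.2⟩) _
      rw [Set.indicator_of_mem (Set.mem_Ico.mpr ⟨not_lt.1 h1, h2⟩)]
      exact (tendsto_const_nhds).congr' heq.symm
    · have hmem : Ioi t ∈ 𝓝[>] t := self_mem_nhdsWithin
      have heq : Set.indicator (Ioo a b) (fun _ => (1:ℝ)) =ᶠ[𝓝[>] t] fun _ => 0 := by
        filter_upwards [hmem] with s hs
        exact Set.indicator_of_notMem
          (fun hc => absurd hc.2 (not_lt.2 (le_of_lt (lt_of_le_of_lt (not_lt.1 h2) hs)))) _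
      rw [Set.indicator_of_notMem (fun hc => absurd hc.2 (not_lt.2 (not_lt.1 h2)))]
      exact (tendsto_const_nhds).congr' heq.symm

/-- The 1-dimensional counting step. -/
lemma oneDim {ι : Type} (A : Finset ι) (c σ : ι → ℝ) (a b : ι → ℝ) (sec : ι → Set ℝ)
    (hshape : ∀ i ∈ A,
      (σ i = 0 ∧ sec i = ∅ ∧ a i = b i) ∨
      (σ i = 1 ∧ a i ≤ b i ∧ sec i = Icc (a i) (b i)) ∨
      (σ i = -1 ∧ a i < b i ∧ sec i = Ioo (a i) (b i)))
    (hzero : ∀ t, ∑ i ∈ A, c i * (sec i).indicator (fun _ => (1:ℝ)) t = 0) :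
    ∑ i ∈ A, c i * σ i = 0 := by
  classical
  have hr : ∀ t, ∑ i ∈ A, c i * (Ico (a i) (b i)).indicator (fun _ => (1:ℝ)) t = 0 := by
    intro t
    have h1 : Tendsto (fun s => ∑ i ∈ A, c i * (sec i).indicator (fun _ => (1:ℝ)) s) (𝓝[>] t)
        (𝓝 (∑ i ∈ A, c i * (Ico (a i) (b i)).indicator (fun _ => (1:ℝ)) t)) := by
      apply tendsto_finset_sum
      intro i hi
      apply Tendsto.const_mul
      rcases hshape i hi with ⟨_, hsec, hab⟩ | ⟨_, hab, hsec⟩ | ⟨_, hab, hsec⟩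
      · rw [hsec, hab]
        simp only [Set.indicator_empty, Set.Ico_self, Set.indicator_empty]
        exact tendsto_const_nhds
      · rw [hsec]; exact tendsto_indicator_Icc _ _ _
      · rw [hsec]; exact tendsto_indicator_Ioo _ _ _
    have h2 : Tendsto (fun s => ∑ i ∈ A, c i * (sec i).indicator (fun _ => (1:ℝ)) s) (𝓝[>] t)
        (𝓝 0) := by
      have : (fun s => ∑ i ∈ A, c i * (sec i).indicator (fun _ => (1:ℝ)) s) = fun _ => (0:ℝ) := by
        funext s; exact hzero s
      rw [this]; exact tendsto_const_nhds
    exact (tendsto_nhds_unique h2 h1).symm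
  set T : Finset ℝ := A.image a ∪ A.image b with hT
  have key : ∀ i ∈ A,
      (∑ t ∈ T, (c i * (sec i).indicator (fun _ => (1:ℝ)) t
        - c i * (Ico (a i) (b i)).indicator (fun _ => (1:ℝ)) t)) = c i * σ i := by
    intro i hi
    rcases hshape i hi with ⟨hσ, hsec, hab⟩ | ⟨hσ, hab, hsec⟩ | ⟨hσ, hab, hsec⟩
    · simp [hsec, hab, hσ]
    · have hfun : ∀ t, c i * (sec i).indicator (fun _ => (1:ℝ)) t
          - c i * (Ico (a i) (b i)).indicator (fun _ => (1:ℝ)) t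
          = if t = b i then c i else 0 := by
        intro t
        rw [hsec]
        by_cases h : t = b i
        · subst h
          rw [Set.indicator_of_mem (Set.mem_Icc.mpr ⟨hab, le_refl _⟩),
            Set.indicator_of_notMem (fun hc => absurd (Set.mem_Ico.mp hc).2 (lt_irrefl _))]
          simp
        · have hiff : t ∈ Icc (a i) (b i) ↔ t ∈ Ico (a i) (b i) := by
            constructor
            · exact fun hc => ⟨hc.1, lt_of_le_of_ne hc.2 h⟩
            · exact fun hc => ⟨hc.1, le_of_lt hc.2⟩
          by_cases h2 : t ∈ Icc (a i) (b i)
          · rw [Set.indicator_of_mem h2, Set.indicator_of_mem (hiff.1 h2)]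
            simp [h]
          · rw [Set.indicator_of_notMem h2, Set.indicator_of_notMem (fun hc => h2 (hiff.2 hc))]
            simp [h]
      rw [Finset.sum_congr rfl (fun t _ => hfun t), Finset.sum_ite_eq' T (b i) (fun _ => c i)]
      rw [if_pos (Finset.mem_union_right _ (Finset.mem_image_of_mem b hi)), hσ, mul_one]
    · have hfun : ∀ t, c i * (sec i).indicator (fun _ => (1:ℝ)) t
          - c i * (Ico (a i) (b i)).indicator (fun _ => (1:ℝ)) t
          = if t = a i then -(c i) else 0 := by
        intro t
        rw [hsec]
        by_cases h : t = a i
        · subst h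
          rw [Set.indicator_of_notMem (fun hc => absurd (Set.mem_Ioo.mp hc).1 (lt_irrefl _)),
            Set.indicator_of_mem (Set.mem_Ico.mpr ⟨le_refl _, hab⟩)]
          simp
        · have hiff : t ∈ Ioo (a i) (b i) ↔ t ∈ Ico (a i) (b i) := by
            constructor
            · exact fun hc => ⟨le_of_lt hc.1, hc.2⟩
            · exact fun hc => ⟨lt_of_le_of_ne hc.1 (Ne.symm h), hc.2⟩
          by_cases h2 : t ∈ Ioo (a i) (b i)
          · rw [Set.indicator_of_mem h2, Set.indicator_of_mem (hiff.1 h2)]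
            simp [h]
          · rw [Set.indicator_of_notMem h2, Set.indicator_of_notMem (fun hc => h2 (hiff.2 hc))]
            simp [h]
      rw [Finset.sum_congr rfl (fun t _ => hfun t), Finset.sum_ite_eq' T (a i) (fun _ => -(c i))]
      rw [if_pos (Finset.mem_union_left _ (Finset.mem_image_of_mem a hi)), hσ]
      ring
  have hzero2 : ∑ t ∈ T, ∑ i ∈ A, (c i * (sec i).indicator (fun _ => (1:ℝ)) t
      - c i * (Ico (a i) (b i)).indicator (fun _ => (1:ℝ)) t) = 0 := by
    apply Finset.sum_eq_zero
    intro t _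
    rw [Finset.sum_sub_distrib, hzero t, hr t, sub_zero]
  rw [Finset.sum_comm] at hzero2
  rw [← Finset.sum_congr rfl key]
  exact hzero2

end OneDim



section Shapes

lemma closed_convex_bounded_eq_Icc {s : Set ℝ} (hcl : IsClosed s) (hc : Convex ℝ s)
    (hb : IsBounded s) (hne : s.Nonempty) :
    sInf s ≤ sSup s ∧ s = Icc (sInf s) (sSup s) := by
  have hcp : IsCompact s := Metric.isCompact_iff_isClosed_bounded.mpr ⟨hcl, hb⟩
  have h1 : sInf s ∈ s := hcp.sInf_mem hne
  have h2 : sSup s ∈ s := hcp.sSup_mem hne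
  refine ⟨csInf_le_csSup hne hb.bddBelow hb.bddAbove, ?_⟩
  apply Set.Subset.antisymm
  · exact fun t ht => ⟨csInf_le hb.bddBelow ht, le_csSup hb.bddAbove ht⟩
  · exact hc.ordConnected.out h1 h2

lemma open_convex_bounded_eq_Ioo {s : Set ℝ} (ho : IsOpen s) (hc : Convex ℝ s)
    (hb : IsBounded s) (hne : s.Nonempty) :
    sInf s < sSup s ∧ s = Ioo (sInf s) (sSup s) := by
  obtain ⟨t0, ht0⟩ := hne
  obtain ⟨δ, hδ, hball⟩ := Metric.isOpen_iff.1 ho t0 ht0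
  have hmem1 : t0 - δ/2 ∈ s := hball (by
    rw [Metric.mem_ball, Real.dist_eq, show t0 - δ/2 - t0 = -(δ/2) by ring, abs_neg,
      abs_of_nonneg (by linarith)]; linarith)
  have hmem2 : t0 + δ/2 ∈ s := hball (by
    rw [Metric.mem_ball, Real.dist_eq, show t0 + δ/2 - t0 = δ/2 by ring,
      abs_of_nonneg (by linarith)]; linarith)
  have hlt : sInf s < sSup s :=
    lt_of_le_of_lt (csInf_le hb.bddBelow hmem1)
      (lt_of_lt_of_le (by linarith) (le_csSup hb.bddAbove hmem2))
  have hInf : sInf s ∉ s := by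
    intro hmem
    obtain ⟨δ', hδ', hball'⟩ := Metric.isOpen_iff.1 ho _ hmem
    have : sInf s - δ'/2 ∈ s := hball' (by
      rw [Metric.mem_ball, Real.dist_eq, show sInf s - δ'/2 - sInf s = -(δ'/2) by ring, abs_neg,
        abs_of_nonneg (by linarith)]; linarith)
    have := csInf_le hb.bddBelow this
    linarith
  have hSup : sSup s ∉ s := by
    intro hmem
    obtain ⟨δ', hδ', hball'⟩ := Metric.isOpen_iff.1 ho _ hmem
    have : sSup s + δ'/2 ∈ s := hball' (by
      rw [Metric.mem_ball, Real.dist_eq, show sSup s + δ'/2 - sSup s = δ'/2 by ring,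
        abs_of_nonneg (by linarith)]; linarith)
    have := le_csSup hb.bddAbove this
    linarith
  refine ⟨hlt, Set.Subset.antisymm ?_ ?_⟩
  · intro t ht
    refine ⟨lt_of_le_of_ne (csInf_le hb.bddBelow ht) ?_, lt_of_le_of_ne (le_csSup hb.bddAbove ht) ?_⟩
    · exact fun h => hInf (h ▸ ht)
    · exact fun h => hSup (h ▸ ht)
  · intro t ht
    obtain ⟨u, hu, hut⟩ := exists_lt_of_csInf_lt ⟨t0, ht0⟩ ht.1
    obtain ⟨v, hv, htv⟩ := exists_lt_of_lt_csSup ⟨t0, ht0⟩ ht.2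
    exact hc.ordConnected.out hu hv ⟨hut.le, htv.le⟩

variable {E : Type} [NormedAddCommGroup E] [NormedSpace ℝ E]

/-- A closed bounded convex set of positive dimension has a point that is not
in its relative interior. -/
lemma exists_not_relint {U : Set E} (hconv : Convex ℝ U) (hcl : IsClosed U)
    (hbd : IsBounded U) (hne : U.Nonempty)
    (hd : vectorSpan ℝ U ≠ ⊥) :
    ∃ x ∈ U, ¬ (∃ ε > 0, ∀ y ∈ (affineSpan ℝ U : Set E), dist y x < ε → y ∈ U) := by
  obtain ⟨v, hv, hv0⟩ := Submodule.exists_mem_ne_zero_of_ne_bot hd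
  obtain ⟨z, hz⟩ := hne
  have hzspan : z ∈ affineSpan ℝ U := subset_affineSpan ℝ U hz
  have hline : ∀ t : ℝ, z + t • v ∈ (affineSpan ℝ U : Set E) := by
    intro t
    have : (t • v) +ᵥ z ∈ affineSpan ℝ U :=
      AffineSubspace.vadd_mem_of_mem_direction
        (Submodule.smul_mem _ t ((direction_affineSpan ℝ U).symm ▸ hv)) hzspan
    simpa [add_comm] using this
  obtain ⟨C, hC⟩ := isBounded_iff_forall_norm_le.1 hbd
  have hvpos : (0:ℝ) < ‖v‖ := norm_pos_iff.2 hv0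
  -- the set of parameters staying in U
  set S : Set ℝ := {t : ℝ | 0 ≤ t ∧ z + t • v ∈ U} with hS
  have hS0 : (0:ℝ) ∈ S := ⟨le_refl _, by simpa using hz⟩
  have hSb : BddAbove S := by
    refine ⟨(C + ‖z‖)/‖v‖, fun t ht => ?_⟩
    have h1 : ‖z + t • v‖ ≤ C := hC _ ht.2
    have h2 : ‖t • v‖ ≤ ‖z + t • v‖ + ‖z‖ := by
      calc ‖t • v‖ = ‖(z + t • v) - z‖ := by rw [add_sub_cancel_left]
      _ ≤ ‖z + t • v‖ + ‖z‖ := norm_sub_le _ _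
    have h3 : t * ‖v‖ ≤ C + ‖z‖ := by
      rw [norm_smul, Real.norm_eq_abs, abs_of_nonneg ht.1] at h2
      linarith
    rw [le_div_iff₀ hvpos]
    exact h3
  set tstar := sSup S with htstar
  have htpos : (0:ℝ) ≤ tstar := le_csSup hSb hS0
  have hsub : ∀ a b : ℝ, (z + a • v) - (z + b • v) = (a - b) • v := by
    intro a b; rw [sub_smul]; abel
  have hdistline : ∀ a b : ℝ, dist (z + a • v) (z + b • v) = |a - b| * ‖v‖ := by
    intro a b; rw [dist_eq_norm, hsub, norm_smul, Real.norm_eq_abs]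
  have hxstar : z + tstar • v ∈ U := by
    rw [← hcl.closure_eq]
    rw [Metric.mem_closure_iff]
    intro ε hε
    have hε' : 0 < ε / ‖v‖ := div_pos hε hvpos
    obtain ⟨t, htS, htgt⟩ := exists_lt_of_lt_csSup ⟨0, hS0⟩ (by linarith : tstar - ε/‖v‖ < tstar)
    refine ⟨z + t • v, htS.2, ?_⟩
    rw [hdistline]
    have hle : t ≤ tstar := le_csSup hSb htS
    rw [abs_of_nonneg (by linarith)]
    calc (tstar - t) * ‖v‖ < (ε/‖v‖) * ‖v‖ := by
          apply mul_lt_mul_of_pos_right _ hvpos; linarith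
    _ = ε := div_mul_cancel₀ _ (ne_of_gt hvpos)
  refine ⟨z + tstar • v, hxstar, ?_⟩
  rintro ⟨ε, hε, hball⟩
  set δ := ε / (2 * ‖v‖) with hδdef
  have hδpos : 0 < δ := div_pos hε (by linarith)
  have hymem : z + (tstar + δ) • v ∈ U := by
    apply hball _ (hline _)
    rw [hdistline]
    rw [show tstar + δ - tstar = δ by ring, abs_of_nonneg hδpos.le, hδdef]
    rw [div_mul_eq_mul_div, mul_comm]
    rw [div_lt_iff₀ (by linarith : (0:ℝ) < 2 * ‖v‖)]
    nlinarith
  have : tstar + δ ≤ tstar := le_csSup hSb ⟨by linarith, hymem⟩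
  linarith

end Shapes

section ProdLemmas

variable {F : Type} [NormedAddCommGroup F] [NormedSpace ℝ F]

/-- The vertical section of a subset of `F × ℝ`. -/
def secAt (V : Set (F × ℝ)) (x : F) : Set ℝ := {t | (x, t) ∈ V}

lemma secAt_convex {V : Set (F × ℝ)} (hV : Convex ℝ V) (x : F) : Convex ℝ (secAt V x) := by
  intro t1 h1 t2 h2 α β hα hβ hsum
  have key : (α • ((x, t1) : F × ℝ) + β • (x, t2)) = (x, α • t1 + β • t2) := by
    rw [Prod.smul_mk, Prod.smul_mk, Prod.mk_add_mk]
    congr 1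
    rw [← add_smul, hsum, one_smul]
  have := hV h1 h2 hα hβ hsum
  rw [key] at this
  exact this

lemma secAt_bounded {V : Set (F × ℝ)} (hV : IsBounded V) (x : F) : IsBounded (secAt V x) := by
  obtain ⟨C, hC⟩ := isBounded_iff_forall_norm_le.1 hV
  exact isBounded_iff_forall_norm_le.2 ⟨C, fun t ht => le_trans (norm_snd_le ((x, t) : F × ℝ)) (hC _ ht)⟩

lemma secAt_closed {V : Set (F × ℝ)} (hV : IsClosed V) (x : F) : IsClosed (secAt V x) :=
  hV.preimage (Continuous.prodMk_right x)

lemma secAt_open_of_vert {V : Set (F × ℝ)} (hro : RelOpen V)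
    (hvert : ((0:F), (1:ℝ)) ∈ vectorSpan ℝ V) (x : F) : IsOpen (secAt V x) := by
  obtain ⟨W, hW, hVW⟩ := hro
  rw [Metric.isOpen_iff]
  intro t ht
  have htW : ((x, t) : F × ℝ) ∈ W := (hVW ▸ ht).2
  obtain ⟨δ, hδ, hball⟩ := Metric.isOpen_iff.1 hW _ htW
  refine ⟨δ, hδ, fun s hs => ?_⟩
  rw [Metric.mem_ball, Real.dist_eq] at hs
  have hspan : ((x, s) : F × ℝ) ∈ affineSpan ℝ V := by
    have hdir : ((s - t) • (((0:F), (1:ℝ)) : F × ℝ)) ∈ (affineSpan ℝ V).direction :=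
      (direction_affineSpan ℝ V).symm ▸ Submodule.smul_mem _ _ hvert
    have hmem : ((x, t) : F × ℝ) ∈ affineSpan ℝ V := subset_affineSpan ℝ V ht
    have := AffineSubspace.vadd_mem_of_mem_direction hdir hmem
    have heq : ((s - t) • (((0:F), (1:ℝ)) : F × ℝ)) +ᵥ ((x, t) : F × ℝ) = ((x, s) : F × ℝ) := by
      rw [Prod.smul_mk, vadd_eq_add, Prod.mk_add_mk]
      simp
    rwa [heq] at this
  have hWmem : ((x, s) : F × ℝ) ∈ W := by
    apply hball
    rw [Metric.mem_ball, Prod.dist_eq]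
    simp [Real.dist_eq, hs]
  exact hVW ▸ ⟨hspan, hWmem⟩

lemma secAt_subsingleton_of_not_vert {V : Set (F × ℝ)}
    (hnv : ((0:F), (1:ℝ)) ∉ vectorSpan ℝ V) {x : F} {t1 t2 : ℝ}
    (h1 : (x, t1) ∈ V) (h2 : (x, t2) ∈ V) : t1 = t2 := by
  by_contra hne
  apply hnv
  have hdiff : (((x, t1) : F × ℝ) -ᵥ ((x, t2) : F × ℝ)) ∈ vectorSpan ℝ V :=
    vsub_mem_vectorSpan ℝ h1 h2
  have heq : (((x, t1) : F × ℝ) -ᵥ ((x, t2) : F × ℝ)) = ((0:F), t1 - t2) := by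
    rw [vsub_eq_sub, Prod.mk_sub_mk]; simp
  rw [heq] at hdiff
  have := Submodule.smul_mem _ (t1 - t2)⁻¹ hdiff
  have heq2 : (t1 - t2)⁻¹ • (((0:F), t1 - t2) : F × ℝ) = ((0:F), (1:ℝ)) := by
    rw [Prod.smul_mk]
    congr 1
    · simp
    · exact inv_mul_cancel₀ (sub_ne_zero.2 hne)
  rwa [heq2] at this

lemma fst_image_affineSpan (V : Set (F × ℝ)) :
    (affineSpan ℝ (Prod.fst '' V) : Set F) = Prod.fst '' (affineSpan ℝ V : Set (F × ℝ)) :=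
  affineSpan_linear_image (LinearMap.fst ℝ F ℝ) V

lemma fst_image_vectorSpan (V : Set (F × ℝ)) :
    vectorSpan ℝ (Prod.fst '' V) = Submodule.map (LinearMap.fst ℝ F ℝ) (vectorSpan ℝ V) :=
  vectorSpan_linear_image (LinearMap.fst ℝ F ℝ) V

lemma relOpen_fst_image_vert {V : Set (F × ℝ)} (hro : RelOpen V)
    (hvert : ((0:F), (1:ℝ)) ∈ vectorSpan ℝ V) : RelOpen (Prod.fst '' V) := by
  obtain ⟨W, hW, hVW⟩ := hro
  rw [relOpen_iff_balls]
  intro x0 hx0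
  obtain ⟨u0, hu0, hu0x⟩ := hx0
  have hu0W : u0 ∈ W := (hVW ▸ hu0).2
  obtain ⟨δ, hδ, hball⟩ := Metric.isOpen_iff.1 hW _ hu0W
  refine ⟨δ, hδ, fun y hy hdy => ?_⟩
  rw [fst_image_affineSpan] at hy
  obtain ⟨u, hu, huy⟩ := hy
  set w : F × ℝ := (y, u0.2) with hwdef
  have hwspan : w ∈ affineSpan ℝ V := by
    have hdir : ((u0.2 - u.2) • (((0:F), (1:ℝ)) : F × ℝ)) ∈ (affineSpan ℝ V).direction :=
      (direction_affineSpan ℝ V).symm ▸ Submodule.smul_mem _ _ hvert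
    have := AffineSubspace.vadd_mem_of_mem_direction hdir hu
    have heq : ((u0.2 - u.2) • (((0:F), (1:ℝ)) : F × ℝ)) +ᵥ u = w := by
      rw [Prod.smul_mk, vadd_eq_add, hwdef]
      have : u = (u.1, u.2) := rfl
      rw [this, Prod.mk_add_mk, huy]
      simp
    rwa [heq] at this
  have hwW : w ∈ W := by
    apply hball
    have hdw : dist w u0 = dist y x0 := by
      rw [hwdef, Prod.dist_eq]
      simp [hu0x]
    rw [Metric.mem_ball, hdw]
    exact hdy
  have hwV : w ∈ V := hVW ▸ ⟨hwspan, hwW⟩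
  exact ⟨w, hwV, rfl⟩

end ProdLemmas

section ProdRank

variable {F : Type} [NormedAddCommGroup F] [NormedSpace ℝ F] [FiniteDimensional ℝ F]

lemma ker_fst_eq_bot_of_not_vert {V : Set (F × ℝ)}
    (hnv : ((0:F), (1:ℝ)) ∉ vectorSpan ℝ V) :
    LinearMap.ker ((LinearMap.fst ℝ F ℝ).comp (vectorSpan ℝ V).subtype) = ⊥ := by
  rw [Submodule.eq_bot_iff]
  rintro ⟨⟨vx, vt⟩, hvmem⟩ hker
  have hvx : vx = 0 := hker
  have hvt : vt = 0 := by
    by_contra hvt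
    apply hnv
    have := Submodule.smul_mem (vectorSpan ℝ V) vt⁻¹ hvmem
    have heq : vt⁻¹ • ((vx, vt) : F × ℝ) = ((0:F), (1:ℝ)) := by
      rw [Prod.smul_mk, hvx]
      congr 1
      · simp
      · exact inv_mul_cancel₀ hvt
    rwa [heq] at this
  apply Subtype.ext
  simp [hvx, hvt]

lemma finrank_fst_image_vert {V : Set (F × ℝ)}
    (hvert : ((0:F), (1:ℝ)) ∈ vectorSpan ℝ V) :
    finrank ℝ (vectorSpan ℝ (Prod.fst '' V)) + 1 = finrank ℝ (vectorSpan ℝ V) := by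
  set Vs := vectorSpan ℝ V with hVs
  set φ := (LinearMap.fst ℝ F ℝ).comp Vs.subtype with hφ
  have hrange : LinearMap.range φ = Submodule.map (LinearMap.fst ℝ F ℝ) Vs := by
    rw [hφ, LinearMap.range_comp, Submodule.range_subtype]
  have helt : (⟨((0:F), (1:ℝ)), hvert⟩ : ↥Vs) ≠ 0 := by
    intro h
    have h2 : ((0:F), (1:ℝ)) = (0 : F × ℝ) := congrArg Subtype.val h
    exact one_ne_zero (congrArg Prod.snd h2)
  have hker : LinearMap.ker φ = Submodule.span ℝ {(⟨((0:F), (1:ℝ)), hvert⟩ : ↥Vs)} := by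
    ext v
    rw [LinearMap.mem_ker, Submodule.mem_span_singleton]
    constructor
    · intro hv
      refine ⟨(v : F × ℝ).2, ?_⟩
      apply Subtype.ext
      have hfst : (v : F × ℝ).1 = 0 := hv
      rw [Submodule.coe_smul]
      show ((v : F × ℝ).2) • (((0:F), (1:ℝ)) : F × ℝ) = (v : F × ℝ)
      rw [Prod.smul_mk]
      rw [show ((v : F × ℝ).2 • (0:F), (v : F × ℝ).2 • (1:ℝ)) = ((0:F), (v : F × ℝ).2) by simp]
      rw [← hfst]
    · rintro ⟨r, rfl⟩
      show (r • (((0:F), (1:ℝ)) : F × ℝ)).1 = 0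
      simp
  have hrn := LinearMap.finrank_range_add_finrank_ker φ
  rw [hrange, hker, finrank_span_singleton helt] at hrn
  rw [fst_image_vectorSpan, ← hVs]
  exact hrn

lemma finrank_fst_image_nonvert {V : Set (F × ℝ)}
    (hnv : ((0:F), (1:ℝ)) ∉ vectorSpan ℝ V) :
    finrank ℝ (vectorSpan ℝ (Prod.fst '' V)) = finrank ℝ (vectorSpan ℝ V) := by
  set Vs := vectorSpan ℝ V with hVs
  set φ := (LinearMap.fst ℝ F ℝ).comp Vs.subtype with hφ
  have hrange : LinearMap.range φ = Submodule.map (LinearMap.fst ℝ F ℝ) Vs := by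
    rw [hφ, LinearMap.range_comp, Submodule.range_subtype]
  have hrn := LinearMap.finrank_range_add_finrank_ker φ
  rw [hrange, ker_fst_eq_bot_of_not_vert hnv, finrank_bot, add_zero] at hrn
  rw [fst_image_vectorSpan, ← hVs]
  exact hrn

lemma relOpen_fst_image_nonvert {V : Set (F × ℝ)} (hro : RelOpen V)
    (hnv : ((0:F), (1:ℝ)) ∉ vectorSpan ℝ V) : RelOpen (Prod.fst '' V) := by
  obtain ⟨W, hW, hVW⟩ := hro
  set Vs := vectorSpan ℝ V with hVs
  set φ := (LinearMap.fst ℝ F ℝ).comp Vs.subtype with hφ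
  have hinj : Function.Injective φ := by
    rw [← LinearMap.ker_eq_bot]
    exact ker_fst_eq_bot_of_not_vert hnv
  set ρ := (LinearEquiv.ofInjective φ hinj).symm with hρ
  set ψ := Vs.subtype.comp ρ.toLinearMap with hψ
  have hψcont : Continuous ψ := ψ.continuous_of_finiteDimensional
  rw [relOpen_iff_balls]
  intro x0 hx0
  obtain ⟨u0, hu0, hu0x⟩ := hx0
  have hu0W : u0 ∈ W := (hVW ▸ hu0).2
  obtain ⟨δ, hδ, hball⟩ := Metric.isOpen_iff.1 hW _ hu0W
  obtain ⟨ε, hε, himp⟩ := Metric.continuousAt_iff.1 hψcont.continuousAt δ hδ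
  refine ⟨ε, hε, fun y hy hdy => ?_⟩
  rw [fst_image_affineSpan] at hy
  obtain ⟨u, hu, huy⟩ := hy
  have hdiff : u - u0 ∈ Vs := by
    have := AffineSubspace.vsub_mem_direction hu (subset_affineSpan ℝ V hu0)
    rwa [direction_affineSpan] at this
  have hwmem : y - x0 ∈ LinearMap.range φ := ⟨⟨u - u0, hdiff⟩, by
    show (u - u0).1 = y - x0
    rw [Prod.fst_sub, huy, hu0x]⟩
  set w : ↥(LinearMap.range φ) := ⟨y - x0, hwmem⟩ with hw
  have hwdist : dist w 0 < ε := by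
    have : dist w 0 = ‖y - x0‖ := by
      rw [dist_eq_norm, sub_zero]
      rfl
    rw [this, ← dist_eq_norm]
    exact hdy
  have hψw : ψ w ∈ Vs := (ρ w).2
  set u' : F × ℝ := ψ w + u0 with hu'
  have hu'span : u' ∈ affineSpan ℝ V := by
    have hd : ψ w ∈ (affineSpan ℝ V).direction := (direction_affineSpan ℝ V).symm ▸ hψw
    have := AffineSubspace.vadd_mem_of_mem_direction hd (subset_affineSpan ℝ V hu0)
    rwa [vadd_eq_add] at this
  have hu'W : u' ∈ W := by
    apply hball
    rw [Metric.mem_ball, hu', dist_eq_norm, add_sub_cancel_right]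
    have := himp hwdist
    rwa [map_zero, dist_eq_norm, sub_zero] at this
  have hu'V : u' ∈ V := hVW ▸ ⟨hu'span, hu'W⟩
  refine ⟨u', hu'V, ?_⟩
  have hcoe : (ψ w).1 = y - x0 := by
    have h1 : φ (ρ w) = ((LinearEquiv.ofInjective φ hinj) (ρ w) : F) :=
      (LinearEquiv.ofInjective_apply φ (ρ w)).symm
    have h2 : ((LinearEquiv.ofInjective φ hinj) (ρ w) : F) = (w : F) := by
      rw [hρ, LinearEquiv.apply_symm_apply]
    have h3 : (ψ w).1 = φ (ρ w) := rfl
    rw [h3, h1, h2]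
  rw [hu', Prod.fst_add, hcoe, hu0x]
  abel

end ProdRank

section Key

theorem key_valuation : ∀ (k : ℕ) (E : Type) [NormedAddCommGroup E] [NormedSpace ℝ E]
    [FiniteDimensional ℝ E], finrank ℝ E = k →
    ∀ {ι : Type} (A : Finset ι) (U : ι → Set E) (c ε : ι → ℝ),
    (∀ i ∈ A, GoodPair (U i) (ε i)) →
    (∀ x, ∑ i ∈ A, c i * (U i).indicator (fun _ => (1:ℝ)) x = 0) →
    ∑ i ∈ A, c i * ε i = 0 := by
  intro k
  induction k with
  | zero =>
    intro E _ _ _ hE ι A U c ε hgood hzero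
    haveI : Subsingleton E := finrank_zero_iff.1 hE
    have hε1 : ∀ i ∈ A, ε i = 1 := by
      intro i hi
      rcases (hgood i hi).2.2.2 with ⟨_, h⟩ | ⟨_, h⟩
      · exact h
      · rw [h]
        have hle := Submodule.finrank_le (vectorSpan ℝ (U i))
        rw [hE] at hle
        rw [Nat.le_zero.1 hle, pow_zero]
    have hind : ∀ i ∈ A, (U i).indicator (fun _ => (1:ℝ)) 0 = 1 := by
      intro i hi
      obtain ⟨u, hu⟩ := (hgood i hi).1
      rw [Subsingleton.elim (0 : E) u]
      exact Set.indicator_of_mem hu _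
    calc ∑ i ∈ A, c i * ε i = ∑ i ∈ A, c i * (U i).indicator (fun _ => (1:ℝ)) 0 := by
          apply Finset.sum_congr rfl
          intro i hi
          rw [hε1 i hi, hind i hi]
    _ = 0 := hzero 0
  | succ k IH =>
    intro E _ _ _ hE ι A U c ε hgood hzero
    classical
    set F := (Fin k → ℝ) with hF
    have hfr : finrank ℝ E = finrank ℝ (F × ℝ) := by
      rw [hE, finrank_prod, finrank_fin_fun, finrank_self]
    set e : E ≃L[ℝ] F × ℝ := ContinuousLinearEquiv.ofFinrankEq hfr with he
    set W : ι → Set (F × ℝ) := fun i => e '' (U i) with hWdef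
    have hgoodW : ∀ i ∈ A, GoodPair (W i) (ε i) := fun i hi => (hgood i hi).image e
    have hzeroW : ∀ p : F × ℝ, ∑ i ∈ A, c i * (W i).indicator (fun _ => (1:ℝ)) p = 0 := by
      intro p
      have hz := hzero (e.symm p)
      have hind : ∀ i, (W i).indicator (fun _ => (1:ℝ)) p
          = (U i).indicator (fun _ => (1:ℝ)) (e.symm p) := by
        intro i
        by_cases h : e.symm p ∈ U i
        · rw [Set.indicator_of_mem h, Set.indicator_of_mem]
          exact ⟨e.symm p, h, by simp⟩
        · rw [Set.indicator_of_notMem h, Set.indicator_of_notMem]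
          rintro ⟨u, hu, hup⟩
          apply h
          have : e.symm p = u := by rw [← hup]; simp
          rw [this]; exact hu
      simp only [hind]
      exact hz
    set s : ι → ℝ := fun i =>
      if IsClosed (W i) then 1
      else if ((0 : F), (1:ℝ)) ∈ vectorSpan ℝ (W i) then -1 else 1 with hsdef
    set B : ι → Set F := fun i => Prod.fst '' (W i) with hBdef
    have hBbd : ∀ i ∈ A, IsBounded (B i) := by
      intro i hi
      obtain ⟨C, hC⟩ := isBounded_iff_forall_norm_le.1 (hgoodW i hi).2.2.1
      exact isBounded_iff_forall_norm_le.2 ⟨C, by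
        rintro x ⟨u, hu, rfl⟩
        exact le_trans (norm_fst_le u) (hC _ hu)⟩
    have hBconv : ∀ i ∈ A, Convex ℝ (B i) := fun i hi =>
      (hgoodW i hi).2.1.linear_image (LinearMap.fst ℝ F ℝ)
    have hBne : ∀ i ∈ A, (B i).Nonempty := fun i hi => ((hgoodW i hi).1).image _
    -- closed case: the weight must be 1
    have hεclosed : ∀ i ∈ A, IsClosed (W i) → ε i = 1 := by
      intro i hi hcl
      rcases (hgoodW i hi).2.2.2 with ⟨_, h⟩ | ⟨hro, h⟩
      · exact h
      · rw [h]
        have hbot : vectorSpan ℝ (W i) = ⊥ := by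
          by_contra hne
          obtain ⟨x, hxU, hnb⟩ := exists_not_relint (hgoodW i hi).2.1 hcl
            (hgoodW i hi).2.2.1 (hgoodW i hi).1 hne
          exact hnb (relOpen_iff_balls.1 hro x hxU)
        rw [hbot, finrank_bot, pow_zero]
    have hgoodB : ∀ i ∈ A, GoodPair (B i) (ε i * s i) := by
      intro i hi
      refine ⟨hBne i hi, hBconv i hi, hBbd i hi, ?_⟩
      by_cases hcl : IsClosed (W i)
      · left
        have hcp : IsCompact (W i) :=
          Metric.isCompact_iff_isClosed_bounded.mpr ⟨hcl, (hgoodW i hi).2.2.1⟩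
        constructor
        · exact (hcp.image continuous_fst).isClosed
        · rw [hεclosed i hi hcl, hsdef]
          simp [hcl]
      · have hro : RelOpen (W i) := by
          rcases (hgoodW i hi).2.2.2 with ⟨h, _⟩ | ⟨hro, _⟩
          · exact absurd h hcl
          · exact hro
        have hw : ε i = (-1) ^ finrank ℝ (vectorSpan ℝ (W i)) := by
          rcases (hgoodW i hi).2.2.2 with ⟨h, _⟩ | ⟨_, h⟩
          · exact absurd h hcl
          · exact h
        right
        by_cases hv : ((0 : F), (1:ℝ)) ∈ vectorSpan ℝ (W i)
        · refine ⟨relOpen_fst_image_vert hro hv, ?_⟩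
          have hrk := finrank_fst_image_vert (V := W i) hv
          have hsi : s i = -1 := by rw [hsdef]; simp [hcl, hv]
          rw [hw, hsi, ← hrk, pow_succ]
          ring
        · refine ⟨relOpen_fst_image_nonvert hro hv, ?_⟩
          have hrk := finrank_fst_image_nonvert (V := W i) hv
          have hsi : s i = 1 := by rw [hsdef]; simp [hcl, hv]
          rw [hw, hsi, ← hrk]
          ring
    -- pointwise projection identity via the one-dimensional lemma
    have hzeroB : ∀ x : F, ∑ i ∈ A, (c i * s i) * (B i).indicator (fun _ => (1:ℝ)) x = 0 := by
      intro x
      have h1d := oneDim A c (fun i => s i * (B i).indicator (fun _ => (1:ℝ)) x)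
        (fun i => sInf (secAt (W i) x)) (fun i => sSup (secAt (W i) x))
        (fun i => secAt (W i) x) ?_ ?_
      · rw [← h1d]
        apply Finset.sum_congr rfl
        intro i hi
        ring
      · intro i hi
        by_cases hx : x ∈ B i
        · have hsecne : (secAt (W i) x).Nonempty := by
            obtain ⟨u, hu, hux⟩ := hx
            exact ⟨u.2, by rw [secAt, Set.mem_setOf_eq, ← hux]; exact hu⟩
          by_cases hcl : IsClosed (W i)
          · obtain ⟨hab, hsec⟩ := closed_convex_bounded_eq_Icc (secAt_closed hcl x)
              (secAt_convex (hgoodW i hi).2.1 x) (secAt_bounded (hgoodW i hi).2.2.1 x) hsecne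
            right; left
            refine ⟨?_, hab, hsec⟩
            have hsi : s i = 1 := by rw [hsdef]; simp [hcl]
            simp only [hsi, Set.indicator_of_mem hx]
            ring
          · have hro : RelOpen (W i) := by
              rcases (hgoodW i hi).2.2.2 with ⟨h, _⟩ | ⟨hro, _⟩
              · exact absurd h hcl
              · exact hro
            by_cases hv : ((0 : F), (1:ℝ)) ∈ vectorSpan ℝ (W i)
            · obtain ⟨hab, hsec⟩ := open_convex_bounded_eq_Ioo (secAt_open_of_vert hro hv x)
                (secAt_convex (hgoodW i hi).2.1 x) (secAt_bounded (hgoodW i hi).2.2.1 x) hsecne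
              right; right
              refine ⟨?_, hab, hsec⟩
              have hsi : s i = -1 := by rw [hsdef]; simp [hcl, hv]
              simp only [hsi, Set.indicator_of_mem hx]
              ring
            · obtain ⟨t, ht⟩ := hsecne
              have hsec : secAt (W i) x = {t} := by
                apply Set.Subset.antisymm
                · intro t' ht'
                  exact secAt_subsingleton_of_not_vert hv ht' ht
                · intro t' ht'
                  rw [Set.mem_singleton_iff.1 ht']
                  exact ht
              right; left
              refine ⟨?_, ?_, ?_⟩
              · have hsi : s i = 1 := by rw [hsdef]; simp [hcl, hv]
                simp only [hsi, Set.indicator_of_mem hx]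
                ring
              · beta_reduce
                rw [hsec, csInf_singleton, csSup_singleton]
              · beta_reduce
                rw [hsec, csInf_singleton, csSup_singleton, Set.Icc_self]
        · left
          have hsec : secAt (W i) x = ∅ := by
            rw [Set.eq_empty_iff_forall_notMem]
            intro t ht
            exact hx ⟨(x, t), ht, rfl⟩
          refine ⟨?_, hsec, ?_⟩
          · simp only [Set.indicator_of_notMem hx]
            ring
          · beta_reduce
            rw [hsec, Real.sInf_empty, Real.sSup_empty]
      · intro t
        exact hzeroW (x, t)
    -- apply the induction hypothesis
    have hIH := IH F (by show finrank ℝ (Fin k → ℝ) = k; exact finrank_fin_fun ℝ) A B (fun i => c i * s i) (fun i => ε i * s i)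
      hgoodB hzeroB
    have hss : ∀ i, s i * s i = 1 := by
      intro i
      simp only [hsdef]
      by_cases h1 : IsClosed (W i)
      · simp [h1]
      · by_cases h2 : ((0 : F), (1:ℝ)) ∈ vectorSpan ℝ (W i) <;> simp [h1, h2]
    calc ∑ i ∈ A, c i * ε i = ∑ i ∈ A, (c i * s i) * (ε i * s i) := by
          apply Finset.sum_congr rfl
          intro i hi
          calc c i * ε i = c i * ε i * (s i * s i) := by rw [hss i, mul_one]
          _ = (c i * s i) * (ε i * s i) := by ring
    _ = 0 := hIH

end Key

section Relint

variable {E : Type} [NormedAddCommGroup E] [NormedSpace ℝ E]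

/-- relative interior, elementary definition -/
def relint (F : Set E) : Set E :=
  {x | x ∈ F ∧ ∃ ε > 0, ∀ y ∈ (affineSpan ℝ F : Set E), dist y x < ε → y ∈ F}

lemma relint_subset (F : Set E) : relint F ⊆ F := fun _ h => h.1

lemma relint_ball {F : Set E} {x : E} (hx : x ∈ relint F) :
    ∃ ε > 0, ∀ y ∈ (affineSpan ℝ F : Set E), dist y x < ε → y ∈ relint F := by
  obtain ⟨hxF, ε, hε, hb⟩ := hx
  refine ⟨ε/2, by linarith, fun y hy hdy => ?_⟩
  refine ⟨hb y hy (by linarith), ε/2, by linarith, fun z hz hdz => ?_⟩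
  refine hb z hz ?_
  calc dist z x ≤ dist z y + dist y x := dist_triangle _ _ _
  _ < ε := by linarith

lemma relint_convex {F : Set E} (hF : Convex ℝ F) : Convex ℝ (relint F) := by
  intro x1 hx1 x2 hx2 a b ha hb hab
  obtain ⟨hx1F, ε1, hε1, h1⟩ := hx1
  obtain ⟨hx2F, ε2, hε2, h2⟩ := hx2
  have hwF : a • x1 + b • x2 ∈ F := hF hx1F hx2F ha hb hab
  refine ⟨hwF, min ε1 ε2, lt_min hε1 hε2, ?_⟩
  intro y hy hdy
  set w := a • x1 + b • x2 with hwdef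
  have hws : w ∈ (affineSpan ℝ F : Set E) := subset_affineSpan ℝ F hwF
  set δ := y - w with hδdef
  have hδdir : δ ∈ (affineSpan ℝ F).direction := by
    have := AffineSubspace.vsub_mem_direction (hy : y ∈ affineSpan ℝ F) (hws : w ∈ affineSpan ℝ F)
    rwa [vsub_eq_sub] at this
  have hshift : ∀ x : E, x ∈ (affineSpan ℝ F : Set E) → x + δ ∈ (affineSpan ℝ F : Set E) := by
    intro x hxs
    have := AffineSubspace.vadd_mem_of_mem_direction hδdir (hxs : x ∈ affineSpan ℝ F)
    rwa [vadd_eq_add, add_comm] at this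
  have hd1 : dist (x1 + δ) x1 < ε1 := by
    rw [dist_eq_norm, add_sub_cancel_left]
    have : dist y w < min ε1 ε2 := hdy
    rw [dist_eq_norm] at this
    exact lt_of_lt_of_le this (min_le_left _ _)
  have hd2 : dist (x2 + δ) x2 < ε2 := by
    rw [dist_eq_norm, add_sub_cancel_left]
    have : dist y w < min ε1 ε2 := hdy
    rw [dist_eq_norm] at this
    exact lt_of_lt_of_le this (min_le_right _ _)
  have hy1 : x1 + δ ∈ F := h1 _ (hshift x1 (subset_affineSpan ℝ F hx1F)) hd1
  have hy2 : x2 + δ ∈ F := h2 _ (hshift x2 (subset_affineSpan ℝ F hx2F)) hd2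
  have hcomb : a • (x1 + δ) + b • (x2 + δ) = y := by
    rw [smul_add, smul_add]
    have : a • δ + b • δ = δ := by rw [← add_smul, hab, one_smul]
    calc a • x1 + a • δ + (b • x2 + b • δ) = (a • x1 + b • x2) + (a • δ + b • δ) := by abel
    _ = w + δ := by rw [this, hwdef]
    _ = y := by rw [hδdef]; abel
  exact hcomb ▸ hF hy1 hy2 ha hb hab

lemma relint_segment {F : Set E} (hF : Convex ℝ F) {z y : E} (hz : z ∈ relint F) (hy : y ∈ F)
    {t : ℝ} (ht0 : 0 < t) (ht1 : t ≤ 1) : (1 - t) • y + t • z ∈ relint F := by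
  obtain ⟨hzF, ε, hε, hb⟩ := hz
  have hwF : (1 - t) • y + t • z ∈ F := hF hy hzF (by linarith) ht0.le (by ring)
  refine ⟨hwF, t * ε, mul_pos ht0 hε, ?_⟩
  intro y' hy' hdy'
  set w := (1 - t) • y + t • z with hwdef
  have hws : w ∈ (affineSpan ℝ F : Set E) := subset_affineSpan ℝ F hwF
  set q := z + t⁻¹ • (y' - w) with hq
  have hqs : q ∈ (affineSpan ℝ F : Set E) := by
    have hδdir : t⁻¹ • (y' - w) ∈ (affineSpan ℝ F).direction := by
      apply Submodule.smul_mem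
      have := AffineSubspace.vsub_mem_direction (hy' : y' ∈ affineSpan ℝ F)
        (hws : w ∈ affineSpan ℝ F)
      rwa [vsub_eq_sub] at this
    have := AffineSubspace.vadd_mem_of_mem_direction hδdir
      (subset_affineSpan ℝ F hzF : z ∈ affineSpan ℝ F)
    rwa [vadd_eq_add, add_comm] at this
  have hqd : dist q z < ε := by
    rw [hq, dist_eq_norm, add_sub_cancel_left, norm_smul, Real.norm_eq_abs,
      abs_of_pos (inv_pos.2 ht0)]
    have hdw : ‖y' - w‖ < t * ε := by rw [← dist_eq_norm]; exact hdy'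
    calc t⁻¹ * ‖y' - w‖ < t⁻¹ * (t * ε) := by
          exact mul_lt_mul_of_pos_left hdw (inv_pos.2 ht0)
    _ = ε := by field_simp
  have hqF : q ∈ F := hb q hqs hqd
  have hcomb : (1 - t) • y + t • q = y' := by
    rw [hq, smul_add, smul_smul, mul_inv_cancel₀ ht0.ne', one_smul, hwdef]
    abel
  exact hcomb ▸ hF hy hqF (by linarith) ht0.le (by ring)

lemma subset_closure_relint {F : Set E} (hF : Convex ℝ F) {z : E} (hz : z ∈ relint F) :
    F ⊆ closure (relint F) := by
  intro y hy
  rw [Metric.mem_closure_iff]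
  intro ε hε
  set t := min 1 (ε / (2 * (‖z - y‖ + 1))) with ht
  have ht0 : 0 < t := lt_min one_pos (div_pos hε (by positivity))
  refine ⟨(1 - t) • y + t • z, relint_segment hF hz hy ht0 (min_le_left _ _), ?_⟩
  have : dist y ((1 - t) • y + t • z) = t * ‖y - z‖ := by
    rw [dist_eq_norm]
    have : y - ((1 - t) • y + t • z) = t • (y - z) := by
      rw [smul_sub, sub_smul, one_smul]
      abel
    rw [this, norm_smul, Real.norm_eq_abs, abs_of_pos ht0]
  rw [this]
  have h1 : t ≤ ε / (2 * (‖z - y‖ + 1)) := min_le_right _ _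
  have h2 : ‖y - z‖ = ‖z - y‖ := norm_sub_rev _ _
  rw [h2]
  have h3 : (0:ℝ) ≤ ‖z - y‖ := norm_nonneg _
  have h4 : 0 < 2 * (‖z - y‖ + 1) := by positivity
  calc t * ‖z - y‖ ≤ (ε / (2 * (‖z - y‖ + 1))) * ‖z - y‖ := by
        apply mul_le_mul_of_nonneg_right h1 h3
  _ < ε := by
        rw [div_mul_eq_mul_div, div_lt_iff₀ h4]
        nlinarith

lemma relint_span_eq {F : Set E} {z : E} (hz : z ∈ relint F) :
    affineSpan ℝ (relint F) = affineSpan ℝ F := by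
  apply AffineSubspace.ext_of_direction_eq
  · apply le_antisymm
    · rw [direction_affineSpan, direction_affineSpan]
      exact vectorSpan_mono ℝ (relint_subset F)
    · rw [direction_affineSpan, direction_affineSpan]
      intro v hv
      obtain ⟨ε, hε, hb⟩ := relint_ball hz
      by_cases hv0 : v = 0
      · rw [hv0]; exact Submodule.zero_mem _
      have hvn : (0:ℝ) < ‖v‖ := norm_pos_iff.2 hv0
      set cc := ε / (2 * ‖v‖) with hcc
      have hccpos : 0 < cc := div_pos hε (by positivity)
      have hmem : z + cc • v ∈ relint F := by
        apply hb
        · have hd : cc • v ∈ (affineSpan ℝ F).direction := by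
            apply Submodule.smul_mem
            rw [direction_affineSpan]
            exact hv
          have := AffineSubspace.vadd_mem_of_mem_direction hd
            (subset_affineSpan ℝ F hz.1 : z ∈ affineSpan ℝ F)
          rwa [vadd_eq_add, add_comm] at this
        · rw [dist_eq_norm, add_sub_cancel_left, norm_smul, Real.norm_eq_abs, abs_of_pos hccpos,
            hcc]
          rw [div_mul_eq_mul_div, div_lt_iff₀ (by positivity : (0:ℝ) < 2 * ‖v‖)]
          nlinarith
      have hsub : (z + cc • v) - z ∈ vectorSpan ℝ (relint F) := by
        have := vsub_mem_vectorSpan ℝ hmem hz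
        rwa [vsub_eq_sub] at this
      rw [add_sub_cancel_left] at hsub
      have := Submodule.smul_mem (vectorSpan ℝ (relint F)) cc⁻¹ hsub
      rwa [smul_smul, inv_mul_cancel₀ hccpos.ne', one_smul] at this
  · exact ⟨z, subset_affineSpan ℝ (relint F) hz, subset_affineSpan ℝ F hz.1⟩

lemma relint_vectorSpan_eq {F : Set E} {z : E} (hz : z ∈ relint F) :
    vectorSpan ℝ (relint F) = vectorSpan ℝ F := by
  rw [← direction_affineSpan, ← direction_affineSpan, relint_span_eq hz]

lemma relint_relOpen {F : Set E} {z : E} (hz : z ∈ relint F) : RelOpen (relint F) := by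
  rw [relOpen_iff_balls]
  intro x hx
  obtain ⟨ε, hε, hb⟩ := relint_ball hx
  refine ⟨ε, hε, fun y hy hdy => hb y ?_ hdy⟩
  rw [relint_span_eq hz] at hy
  exact hy

end Relint

section RelintNonempty

variable {E : Type} [NormedAddCommGroup E] [NormedSpace ℝ E] [FiniteDimensional ℝ E]

lemma relint_nonempty_of_polytope (T : Finset E) (hT : (T : Set E).Nonempty) :
    (relint (convexHull ℝ (T : Set E))).Nonempty := by
  classical
  set s : Set E := (T : Set E) with hs
  obtain ⟨b, hbs, hspan, hind⟩ := exists_affineIndependent ℝ E s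
  obtain ⟨z, hz⟩ := hT
  have hbne : b.Nonempty := by
    rcases Set.eq_empty_or_nonempty b with h | h
    · exfalso
      have hzz : z ∈ affineSpan ℝ s := subset_affineSpan ℝ s hz
      rw [← hspan, h] at hzz
      rw [AffineSubspace.span_empty] at hzz
      exact AffineSubspace.notMem_bot ℝ E z hzz
    · exact h
  obtain ⟨m, hbm, hmind, hmtop⟩ := exists_subset_affineIndependent_affineSpan_eq_top hind
  haveI : Finite ↥m := finite_of_fin_dim_affineIndependent ℝ hmind
  haveI : Fintype ↥m := Fintype.ofFinite _
  set bas : AffineBasis ↥m ℝ E := ⟨Subtype.val, hmind, by rw [Subtype.range_coe]; exact hmtop⟩ with hbas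
  have hbascoe : ∀ j : ↥m, bas j = (j : E) := fun j => rfl
  set bI : Finset ↥m := Finset.univ.filter (fun i => (i : E) ∈ b) with hbI
  have hbIne : bI.Nonempty := by
    obtain ⟨p, hp⟩ := hbne
    exact ⟨⟨p, hbm hp⟩, by simp [hbI, hp]⟩
  have hcoord_zero : ∀ (i : ↥m), i ∉ bI → ∀ y ∈ affineSpan ℝ b, bas.coord i y = 0 := by
    intro i hi
    set Z : AffineSubspace ℝ E :=
      { carrier := {y | bas.coord i y = 0}
        smul_vsub_vadd_mem' := by
          intro cc p1 p2 p3 h1 h2 h3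
          simp only [Set.mem_setOf_eq] at h1 h2 h3 ⊢
          have hlin : bas.coord i (cc • (p1 -ᵥ p2) +ᵥ p3)
              = cc * (bas.coord i p1 - bas.coord i p2) + bas.coord i p3 := by
            rw [AffineMap.map_vadd, LinearMap.map_smul, AffineMap.linearMap_vsub]
            simp [vsub_eq_sub, vadd_eq_add, smul_eq_mul]
          rw [hlin, h1, h2, h3]
          ring } with hZ
    intro y hy
    have hsub : affineSpan ℝ b ≤ Z := by
      rw [affineSpan_le]
      intro p hp
      show bas.coord i p = 0
      have hpm : p ∈ m := hbm hp
      have : bas.coord i (bas ⟨p, hpm⟩) = if i = ⟨p, hpm⟩ then 1 else 0 := bas.coord_apply i _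
      rw [hbascoe] at this
      rw [this]
      have hne : i ≠ ⟨p, hpm⟩ := by
        intro h
        apply hi
        rw [hbI, Finset.mem_filter]
        exact ⟨Finset.mem_univ _, by rw [h]; exact hp⟩
      simp [hne]
    exact hsub hy
  have hmem_conv : ∀ y, y ∈ affineSpan ℝ b → (∀ i ∈ bI, 0 < bas.coord i y) →
      y ∈ convexHull ℝ b := by
    intro y hys hpos
    have hzero : ∀ i ∈ (Finset.univ : Finset ↥m), i ∉ bI → bas.coord i y = 0 :=
      fun i _ hi => hcoord_zero i hi y hys
    have hsum1 : ∑ i ∈ bI, bas.coord i y = 1 := by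
      rw [Finset.sum_subset (Finset.subset_univ bI) hzero]
      exact bas.sum_coord_apply_eq_one y
    have hcomb : bI.affineCombination ℝ (fun i : ↥m => (i : E)) (fun i => bas.coord i y) = y := by
      have hidc : Set.indicator (↑bI) (fun i => bas.coord i y) = fun i => bas.coord i y := by
        apply Set.indicator_eq_self.2
        intro i hi
        by_contra hni
        exact hi (hzero i (Finset.mem_univ i) (by simpa using hni))
      have htr := Finset.affineCombination_indicator_subset
        (fun i => bas.coord i y) (fun i : ↥m => (i : E)) (Finset.subset_univ bI)
      rw [hidc] at htr
      rw [htr]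
      have := bas.affineCombination_coord_eq_self y
      convert this using 2
      rfl
    rw [← hcomb, affineCombination_eq_centerMass hsum1]
    apply Finset.centerMass_mem_convexHull
    · exact fun i hi => (hpos i hi).le
    · rw [hsum1]; exact one_pos
    · intro i hi
      rw [hbI, Finset.mem_filter] at hi
      exact hi.2
  -- the centroid
  set xstar := bI.centroid ℝ (fun i : ↥m => (i : E)) with hxstar
  have hxstar_coord : ∀ i ∈ bI, bas.coord i xstar = (bI.card : ℝ)⁻¹ := by
    intro i hi
    have := bas.coord_apply_centroid (s := bI) hi
    rw [hxstar]
    convert this using 3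
    rfl
  have hcardpos : 0 < (bI.card : ℝ) := by
    have := Finset.card_pos.2 hbIne
    exact_mod_cast this
  have hxstar_conv : xstar ∈ convexHull ℝ b := by
    rw [hxstar, Finset.centroid_def,
      affineCombination_eq_centerMass (bI.sum_centroidWeights_eq_one_of_nonempty ℝ hbIne)]
    apply Finset.centerMass_mem_convexHull
    · intro i hi
      rw [Finset.centroidWeights_apply]
      positivity
    · rw [bI.sum_centroidWeights_eq_one_of_nonempty ℝ hbIne]; exact one_pos
    · intro i hi
      rw [hbI, Finset.mem_filter] at hi
      exact hi.2
  -- open positivity region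
  set O : Set E := ⋂ i ∈ bI, (bas.coord i) ⁻¹' (Set.Ioi (0:ℝ)) with hO
  have hOopen : IsOpen O := isOpen_biInter_finset fun i _ =>
    (isOpen_Ioi).preimage (bas.coord i).continuous_of_finiteDimensional
  have hxO : xstar ∈ O := by
    rw [hO]
    apply Set.mem_biInter
    intro i hi
    rw [Set.mem_preimage, Set.mem_Ioi, hxstar_coord i hi]
    positivity
  obtain ⟨ε, hε, hball⟩ := Metric.isOpen_iff.1 hOopen _ hxO
  refine ⟨xstar, ?_, ε, hε, ?_⟩
  · exact convexHull_mono hbs hxstar_conv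
  · intro y hy hdy
    have hys : y ∈ affineSpan ℝ b := by
      have h1 : (affineSpan ℝ (convexHull ℝ s) : Set E) = (affineSpan ℝ s : Set E) := by
        rw [affineSpan_convexHull]
      rw [h1, ← hspan] at hy
      exact hy
    have hyO : y ∈ O := hball (Metric.mem_ball.2 hdy)
    have hpos : ∀ i ∈ bI, 0 < bas.coord i y := by
      intro i hi
      have := Set.mem_iInter₂.1 (hO ▸ hyO) i hi
      simpa using this
    exact convexHull_mono hbs (hmem_conv y hys hpos)

end RelintNonempty

section Faces

variable {E : Type} [NormedAddCommGroup E] [InnerProductSpace ℝ E] [FiniteDimensional ℝ E]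

lemma le_sup_on_hull (T : Finset E) (hT : T.Nonempty) (l : E →L[ℝ] ℝ) :
    ∀ x ∈ convexHull ℝ (T : Set E), l x ≤ T.sup' hT l := by
  intro x hx
  have hsub : convexHull ℝ (T : Set E) ⊆ {y | l y ≤ T.sup' hT l} := by
    apply convexHull_min
    · intro y hy
      exact Finset.le_sup' l hy
    · exact convex_halfSpace_le ((l : E →ₗ[ℝ] ℝ).isLinear) _
  exact hsub hx

lemma argmax_eq_levelset (T : Finset E) (hT : T.Nonempty) (l : E →L[ℝ] ℝ) :
    {x ∈ convexHull ℝ (T : Set E) | ∀ y ∈ convexHull ℝ (T : Set E), l y ≤ l x}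
      = {x ∈ convexHull ℝ (T : Set E) | l x = T.sup' hT l} := by
  obtain ⟨s0, hs0, hs0v⟩ := Finset.exists_mem_eq_sup' hT l
  ext x
  constructor
  · rintro ⟨hxP, hmax⟩
    refine ⟨hxP, le_antisymm (le_sup_on_hull T hT l x hxP) ?_⟩
    rw [hs0v]
    exact hmax s0 (subset_convexHull ℝ _ hs0)
  · rintro ⟨hxP, hlx⟩
    exact ⟨hxP, fun y hy => by rw [hlx]; exact le_sup_on_hull T hT l y hy⟩

lemma levelset_eq_hull (T : Finset E) (hT : T.Nonempty) (l : E →L[ℝ] ℝ) :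
    {x ∈ convexHull ℝ (T : Set E) | l x = T.sup' hT l}
      = convexHull ℝ ((T.filter (fun s => l s = T.sup' hT l) : Finset E) : Set E) := by
  classical
  set c := T.sup' hT l with hc
  apply Set.Subset.antisymm
  · rintro x ⟨hxP, hlx⟩
    rw [Finset.convexHull_eq] at hxP
    obtain ⟨w, hw0, hw1, hwx⟩ := hxP
    have hlin : l x = ∑ y ∈ T, w y * l y := by
      rw [← hwx, Finset.centerMass_eq_of_sum_1 _ _ hw1, map_sum]
      apply Finset.sum_congr rfl
      intro y hy
      rw [map_smul, smul_eq_mul]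
      rfl
    have hzero : ∑ y ∈ T, w y * (c - l y) = 0 := by
      rw [Finset.sum_congr rfl (fun y _ => mul_sub (w y) c (l y)), Finset.sum_sub_distrib,
        ← Finset.sum_mul, hw1, one_mul, ← hlin, hlx]
      ring
    have hnn : ∀ y ∈ T, 0 ≤ w y * (c - l y) := by
      intro y hy
      have h1 := hw0 y hy
      have h2 : l y ≤ c := Finset.le_sup' l hy
      nlinarith
    have heach : ∀ y ∈ T, w y * (c - l y) = 0 :=
      (Finset.sum_eq_zero_iff_of_nonneg hnn).1 hzero
    set T0 := T.filter (fun y => w y ≠ 0) with hT0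
    have hT0sub : ∀ y ∈ T0, y ∈ T.filter (fun s => l s = c) := by
      intro y hy
      rw [hT0, Finset.mem_filter] at hy
      rw [Finset.mem_filter]
      refine ⟨hy.1, ?_⟩
      have := heach y hy.1
      rcases mul_eq_zero.1 this with h | h
      · exact absurd h hy.2
      · linarith [sub_eq_zero.1 h]
    have hxcm : T0.centerMass w id = x := by
      rw [hT0, Finset.centerMass_filter_ne_zero, hwx]
    rw [← hxcm]
    apply Finset.centerMass_mem_convexHull
    · intro y hy
      exact hw0 y (Finset.mem_filter.1 (by rw [hT0] at hy; exact hy)).1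
    · have : ∑ y ∈ T0, w y = 1 := by
        rw [hT0, Finset.sum_filter_ne_zero, hw1]
      rw [this]; exact one_pos
    · intro y hy
      exact hT0sub y hy
  · intro x hx
    have h1 : x ∈ convexHull ℝ (T : Set E) := by
      apply convexHull_mono _ hx
      intro y hy
      exact (Finset.mem_filter.1 (by exact_mod_cast hy)).1
    refine ⟨h1, ?_⟩
    have hsub : convexHull ℝ ((T.filter (fun s => l s = c) : Finset E) : Set E)
        ⊆ {y | l y = c} := by
      apply convexHull_min
      · intro y hy
        exact (Finset.mem_filter.1 (by exact_mod_cast hy)).2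
      · exact convex_hyperplane ((l : E →ₗ[ℝ] ℝ).isLinear) _
    exact hsub hx

lemma exposed_face_structure {T : Finset E} (hT : T.Nonempty) {Fc : Set E}
    (hF : IsExposed ℝ (convexHull ℝ (T : Set E)) Fc) (hne : Fc.Nonempty) :
    ∃ l : E →L[ℝ] ℝ,
      Fc = {x ∈ convexHull ℝ (T : Set E) | l x = T.sup' hT l} ∧
      Fc = convexHull ℝ ((T.filter (fun s => l s = T.sup' hT l) : Finset E) : Set E) := by
  obtain ⟨l, hl⟩ := hF hne
  refine ⟨l, ?_, ?_⟩
  · rw [hl, argmax_eq_levelset]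
  · rw [hl, argmax_eq_levelset, levelset_eq_hull]

lemma exposed_face_eq {T : Finset E} {Fc : Set E}
    (hF : IsExposed ℝ (convexHull ℝ (T : Set E)) Fc) (hne : Fc.Nonempty) :
    ∃ T' : Finset E, T' ⊆ T ∧ Fc = convexHull ℝ (T' : Set E) := by
  have hT : T.Nonempty := by
    by_contra h
    rw [Finset.not_nonempty_iff_eq_empty] at h
    obtain ⟨x, hx⟩ := hne
    have := hF.subset hx
    rw [h] at this
    simp at this
  obtain ⟨l, _, h2⟩ := exposed_face_structure hT hF hne
  exact ⟨T.filter (fun s => l s = T.sup' hT l), Finset.filter_subset _ _, h2⟩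

lemma faces_finite (T : Finset E) :
    {Fc : Set E | IsExposed ℝ (convexHull ℝ (T : Set E)) Fc ∧ Fc.Nonempty}.Finite := by
  apply Set.Finite.subset
    (Set.Finite.image (fun T' : Finset E => convexHull ℝ (T' : Set E))
      (T.powerset : Finset (Finset E)).finite_toSet)
  rintro Fc ⟨hF, hne⟩
  obtain ⟨T', hT', hFc⟩ := exposed_face_eq hF hne
  exact ⟨T', by simpa [Finset.mem_powerset] using hT', hFc.symm⟩

lemma exposed_trans (T : Finset E) {Fc Gc : Set E}
    (hF : IsExposed ℝ (convexHull ℝ (T : Set E)) Fc) (hFne : Fc.Nonempty)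
    (hG : IsExposed ℝ Fc Gc) (hGne : Gc.Nonempty) :
    IsExposed ℝ (convexHull ℝ (T : Set E)) Gc := by
  classical
  have hT : T.Nonempty := by
    by_contra h
    rw [Finset.not_nonempty_iff_eq_empty] at h
    obtain ⟨x, hx⟩ := hFne
    have := hF.subset hx
    rw [h] at this
    simp at this
  obtain ⟨l, hl1, hl2⟩ := exposed_face_structure hT hF hFne
  set c := T.sup' hT l with hc
  set T1 := T.filter (fun s => l s = c) with hT1
  have hT1sub : T1 ⊆ T := Finset.filter_subset _ _
  have hT1ne : T1.Nonempty := by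
    by_contra h
    rw [Finset.not_nonempty_iff_eq_empty] at h
    rw [hl2, h] at hFne
    simp at hFne
  obtain ⟨g, hg⟩ := hG hGne
  set c' := T1.sup' hT1ne g with hc'
  have hGc1 : Gc = {x ∈ convexHull ℝ (T1 : Set E) | g x = c'} := by
    rw [hg, hl2, argmax_eq_levelset]
  have hGc2 : Gc = convexHull ℝ ((T1.filter (fun s => g s = c') : Finset E) : Set E) := by
    rw [hGc1, levelset_eq_hull]
  have hT1gne : (T1.filter (fun s => g s = c')).Nonempty := by
    by_contra h
    rw [Finset.not_nonempty_iff_eq_empty] at h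
    rw [hGc2, h] at hGne
    simp at hGne
  set bad := T.filter (fun s => ¬ l s = c) with hbad
  have hbadlt : ∀ s ∈ bad, l s < c := by
    intro s hs
    rw [hbad, Finset.mem_filter] at hs
    exact lt_of_le_of_ne (Finset.le_sup' l hs.1) hs.2
  have hex : ∃ ε > 0, ∀ s ∈ bad, l s + ε * g s < c + ε * c' := by
    by_cases hbne : bad.Nonempty
    · set f : E → ℝ := fun s => if g s ≤ c' then 1 else (c - l s) / (g s - c') with hf
      have hf_pos : ∀ s ∈ bad, 0 < f s := by
        intro s hs
        rw [hf]
        by_cases h : g s ≤ c'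
        · simp [h]
        · simp only [h, if_false]
          push_neg at h
          exact div_pos (by linarith [hbadlt s hs]) (by linarith)
      set ε0 := bad.inf' hbne f with hε0
      have hε0pos : 0 < ε0 := (Finset.lt_inf'_iff hbne).2 hf_pos
      refine ⟨min 1 ε0 / 2, by positivity, ?_⟩
      intro s hs
      set ε := min 1 ε0 / 2 with hεdef
      have hεpos : 0 < ε := by positivity
      have hεlt : ε < f s := by
        have h1 : ε ≤ ε0 / 2 := by
          rw [hεdef]
          have := min_le_right (1:ℝ) ε0
          linarith
        have h2 : ε0 ≤ f s := Finset.inf'_le f hs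
        linarith
      by_cases h : g s ≤ c'
      · have := hbadlt s hs
        nlinarith
      · push_neg at h
        have hfs : f s = (c - l s) / (g s - c') := by rw [hf]; simp [not_le.2 h]
        rw [hfs] at hεlt
        have h2 : ε * (g s - c') < c - l s := by
          rw [lt_div_iff₀ (by linarith : (0:ℝ) < g s - c')] at hεlt
          linarith
        nlinarith
    · exact ⟨1, one_pos, fun s hs => absurd ⟨s, hs⟩ hbne⟩
  obtain ⟨ε, hεpos, hεlt⟩ := hex
  set mfun : E →L[ℝ] ℝ := l + ε • g with hmfun
  have hm_at : ∀ s : E, mfun s = l s + ε * g s := by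
    intro s
    rw [hmfun]
    simp [smul_eq_mul]
  have hfilter_eq : T.filter (fun s => mfun s = c + ε * c') = T1.filter (fun s => g s = c') := by
    ext u
    rw [Finset.mem_filter, Finset.mem_filter, hT1, Finset.mem_filter]
    constructor
    · rintro ⟨huT, hum⟩
      by_cases h : l u = c
      · rw [hm_at, h] at hum
        have : g u = c' := by
          have : ε * g u = ε * c' := by linarith
          exact mul_left_cancel₀ hεpos.ne' this
        exact ⟨⟨huT, h⟩, this⟩
      · exfalso
        have hubad : u ∈ bad := by rw [hbad, Finset.mem_filter]; exact ⟨huT, h⟩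
        have := hεlt u hubad
        rw [hm_at] at hum
        linarith
    · rintro ⟨⟨huT, hul⟩, hug⟩
      refine ⟨huT, ?_⟩
      rw [hm_at, hul, hug]
  have hsup : T.sup' hT mfun = c + ε * c' := by
    apply le_antisymm
    · apply Finset.sup'_le
      intro s hsT
      by_cases h : l s = c
      · have hsT1 : s ∈ T1 := by rw [hT1, Finset.mem_filter]; exact ⟨hsT, h⟩
        have hgle : g s ≤ c' := Finset.le_sup' g hsT1
        rw [hm_at, h]
        nlinarith
      · have hsbad : s ∈ bad := by rw [hbad, Finset.mem_filter]; exact ⟨hsT, h⟩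
        rw [hm_at]
        exact (hεlt s hsbad).le
    · obtain ⟨u, hu⟩ := hT1gne
      rw [Finset.mem_filter, hT1, Finset.mem_filter] at hu
      obtain ⟨⟨huT, hul⟩, hug⟩ := hu
      have : mfun u = c + ε * c' := by rw [hm_at, hul, hug]
      rw [← this]
      exact Finset.le_sup' mfun huT
  intro hGne2
  refine ⟨mfun, ?_⟩
  rw [argmax_eq_levelset T hT mfun, levelset_eq_hull T hT mfun, hsup, hfilter_eq, ← hGc2]

end Faces

section Support

variable {E : Type} [NormedAddCommGroup E] [InnerProductSpace ℝ E] [FiniteDimensional ℝ E]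

lemma exists_proper_subface (T' : Finset E) (hT'ne : (T' : Set E).Nonempty)
    {x : E} (hx : x ∈ convexHull ℝ (T' : Set E))
    (hxn : x ∉ relint (convexHull ℝ (T' : Set E))) :
    ∃ Gc : Set E, IsExposed ℝ (convexHull ℝ (T' : Set E)) Gc ∧ x ∈ Gc ∧
      Gc ≠ convexHull ℝ (T' : Set E) ∧ Gc.Nonempty := by
  classical
  set Fc : Set E := convexHull ℝ (T' : Set E) with hFcdef
  have hFconv : Convex ℝ Fc := convex_convexHull ℝ _
  obtain ⟨z, hz⟩ := relint_nonempty_of_polytope T' hT'ne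
  set V : Submodule ℝ E := vectorSpan ℝ Fc with hV
  set D : Set ↥V := {v : ↥V | z + (v : E) ∈ relint Fc} with hD
  have hD0 : (0 : ↥V) ∈ D := by
    rw [hD]
    simp only [Set.mem_setOf_eq, Submodule.coe_zero, add_zero]
    exact hz
  have hDconv : Convex ℝ D := by
    intro v1 h1 v2 h2 a b ha hb hab
    rw [hD, Set.mem_setOf_eq]
    have heq : a • (z + (v1 : E)) + b • (z + (v2 : E)) = z + ((a • v1 + b • v2 : ↥V) : E) := by
      push_cast
      rw [smul_add, smul_add]
      have hz' : a • z + b • z = z := by rw [← add_smul, hab, one_smul]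
      calc a • z + a • (v1 : E) + (b • z + b • (v2 : E))
          = (a • z + b • z) + (a • (v1 : E) + b • (v2 : E)) := by abel
      _ = z + (a • (v1 : E) + b • (v2 : E)) := by rw [hz']
    rw [← heq]
    exact relint_convex hFconv h1 h2 ha hb hab
  have hDopen : IsOpen D := by
    rw [Metric.isOpen_iff]
    intro v hv
    obtain ⟨ε, hε, hb⟩ := relint_ball (hv : z + (v : E) ∈ relint Fc)
    refine ⟨ε, hε, fun w hw => ?_⟩
    rw [Metric.mem_ball] at hw
    have hspan : z + (w : E) ∈ (affineSpan ℝ Fc : Set E) := by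
      have hd : (w : E) ∈ (affineSpan ℝ Fc).direction := by
        rw [direction_affineSpan]
        exact w.2
      have := AffineSubspace.vadd_mem_of_mem_direction hd
        (subset_affineSpan ℝ Fc (relint_subset Fc hz) : z ∈ affineSpan ℝ Fc)
      rwa [vadd_eq_add, add_comm] at this
    have hdist : dist (z + (w : E)) (z + (v : E)) < ε := by
      rw [dist_eq_norm, add_sub_add_left_eq_sub]
      rw [Subtype.dist_eq, dist_eq_norm] at hw
      exact hw
    exact hb _ hspan hdist
  have hpV : x - z ∈ V := by
    have hxs : x ∈ affineSpan ℝ Fc := subset_affineSpan ℝ Fc hx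
    have hzs : z ∈ affineSpan ℝ Fc := subset_affineSpan ℝ Fc (relint_subset Fc hz)
    have := AffineSubspace.vsub_mem_direction hxs hzs
    rw [direction_affineSpan] at this
    rwa [vsub_eq_sub] at this
  set p : ↥V := ⟨x - z, hpV⟩ with hp
  have hpD : p ∉ D := by
    intro h
    apply hxn
    rw [hD, Set.mem_setOf_eq, hp] at h
    simp only [add_sub_cancel] at h
    exact h
  obtain ⟨f, hf⟩ := geometric_hahn_banach_open_point hDconv hDopen hpD
  set g : E →L[ℝ] ℝ := f.comp (V.orthogonalProjectionOnto) with hg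
  have hgval : ∀ (y : E) (hy : y - z ∈ V), g y = g z + f ⟨y - z, hy⟩ := by
    intro y hy
    have h1 : g y - g z = g (y - z) := by rw [map_sub]
    have h2 : g (y - z) = f ⟨y - z, hy⟩ := by
      rw [hg]
      simp only [ContinuousLinearMap.comp_apply]
      congr 1
      exact Submodule.orthogonalProjectionOnto_mem_subspace_eq_self (⟨y - z, hy⟩ : ↥V)
    linarith
  have hkey : ∀ y ∈ relint Fc, g y < g x := by
    intro y hy
    have hyV : y - z ∈ V := by
      have hys : y ∈ affineSpan ℝ Fc := subset_affineSpan ℝ Fc (relint_subset Fc hy)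
      have hzs : z ∈ affineSpan ℝ Fc := subset_affineSpan ℝ Fc (relint_subset Fc hz)
      have := AffineSubspace.vsub_mem_direction hys hzs
      rw [direction_affineSpan] at this
      rwa [vsub_eq_sub] at this
    have h1 := hgval y hyV
    have h2 := hgval x hpV
    have h3 : f ⟨y - z, hyV⟩ < f p := by
      apply hf
      rw [hD, Set.mem_setOf_eq]
      simp only [add_sub_cancel]
      exact hy
    have hpf : f p = f ⟨x - z, hpV⟩ := rfl
    linarith [h1, h2, h3, hpf]
  have hglez : ∀ y ∈ Fc, g y ≤ g x := by
    intro y hy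
    have hcl : y ∈ closure (relint Fc) := subset_closure_relint hFconv hz hy
    have hset : closure (relint Fc) ⊆ {w | g w ≤ g x} :=
      closure_minimal (fun w hw => (hkey w hw).le)
        (isClosed_le g.continuous continuous_const)
    exact hset hcl
  refine ⟨{y ∈ Fc | ∀ w ∈ Fc, g w ≤ g y}, fun _ => ⟨g, rfl⟩, ⟨hx, hglez⟩, ?_, ⟨x, hx, hglez⟩⟩
  intro heq
  have hzFc : z ∈ Fc := relint_subset Fc hz
  have hzmem : z ∈ {y ∈ Fc | ∀ w ∈ Fc, g w ≤ g y} := by rw [heq]; exact hzFc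
  have h1 : g x ≤ g z := hzmem.2 x hx
  have h2 : g z < g x := hkey z hz
  linarith

lemma relint_face_subset {S : Finset E} {F1 F2 : Set E}
    (h1 : IsExposed ℝ (convexHull ℝ (S : Set E)) F1)
    (h2 : IsExposed ℝ (convexHull ℝ (S : Set E)) F2)
    {x : E} (hx1 : x ∈ relint F1) (hx2 : x ∈ F2) : F1 ⊆ F2 := by
  obtain ⟨m, hm⟩ := h2 ⟨x, hx2⟩
  intro y hy
  obtain ⟨hxF1, ε, hε, hb⟩ := hx1
  set t := ε / (2 * (‖x - y‖ + 1)) with ht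
  have ht0 : 0 < t := div_pos hε (by positivity)
  set w := x + t • (x - y) with hw
  have hwspan : w ∈ (affineSpan ℝ F1 : Set E) := by
    have hd : t • (x - y) ∈ (affineSpan ℝ F1).direction := by
      apply Submodule.smul_mem
      have := AffineSubspace.vsub_mem_direction
        (subset_affineSpan ℝ F1 hxF1 : x ∈ affineSpan ℝ F1)
        (subset_affineSpan ℝ F1 hy : y ∈ affineSpan ℝ F1)
      rwa [vsub_eq_sub] at this
    have := AffineSubspace.vadd_mem_of_mem_direction hd
      (subset_affineSpan ℝ F1 hxF1 : x ∈ affineSpan ℝ F1)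
    rwa [vadd_eq_add, add_comm] at this
  have hwdist : dist w x < ε := by
    rw [hw, dist_eq_norm, add_sub_cancel_left, norm_smul, Real.norm_eq_abs, abs_of_pos ht0, ht]
    rw [div_mul_eq_mul_div, div_lt_iff₀ (by positivity : (0:ℝ) < 2 * (‖x - y‖ + 1))]
    nlinarith [norm_nonneg (x - y)]
  have hwF1 : w ∈ F1 := hb w hwspan hwdist
  have hxmem : x ∈ {v ∈ convexHull ℝ (S : Set E) | ∀ u ∈ convexHull ℝ (S : Set E), m u ≤ m v} :=
    hm ▸ hx2
  have hxmax : ∀ u ∈ convexHull ℝ (S : Set E), m u ≤ m x := hxmem.2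
  have hyP : y ∈ convexHull ℝ (S : Set E) := h1.subset hy
  have hwP : w ∈ convexHull ℝ (S : Set E) := h1.subset hwF1
  have h3 : m w ≤ m x := hxmax w hwP
  have h4 : m w = (1 + t) * m x - t * m y := by
    rw [hw, map_add, map_smul, map_sub, smul_eq_mul]
    ring
  have h5 : m x ≤ m y := by nlinarith
  rw [hm]
  exact ⟨hyP, fun u hu => le_trans (hxmax u hu) (le_trans h5 (le_refl _))⟩

end Support

section Final

variable {E : Type} [NormedAddCommGroup E] [InnerProductSpace ℝ E] [FiniteDimensional ℝ E]

lemma exists_unique_face (S : Finset E) {x : E} (hx : x ∈ convexHull ℝ (S : Set E)) :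
    ∃! Fc : Set E, (IsExposed ℝ (convexHull ℝ (S : Set E)) Fc ∧ Fc.Nonempty) ∧ x ∈ relint Fc := by
  classical
  set P : Set E := convexHull ℝ (S : Set E) with hP
  have hfin : {Fc : Set E | IsExposed ℝ P Fc ∧ Fc.Nonempty}.Finite := faces_finite S
  set Φx : Finset (Set E) := (hfin.toFinset).filter (fun Fc => x ∈ Fc) with hΦx
  have hmem : ∀ Fc ∈ Φx, (IsExposed ℝ P Fc ∧ Fc.Nonempty) ∧ x ∈ Fc := by
    intro Fc h
    rw [hΦx, Finset.mem_filter, Set.Finite.mem_toFinset] at h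
    exact h
  have hPx : P ∈ Φx := by
    rw [hΦx, Finset.mem_filter, Set.Finite.mem_toFinset]
    exact ⟨⟨IsExposed.refl P, ⟨x, hx⟩⟩, hx⟩
  have hΦne : Φx.Nonempty := ⟨P, hPx⟩
  set Fx : Set E := ⋂₀ ↑Φx with hFx
  have hFxexp : IsExposed ℝ P Fx := IsExposed.sInter hΦne (fun B hB => (hmem B hB).1.1)
  have hxFx : x ∈ Fx := Set.mem_sInter.2 (fun B hB => (hmem B (by exact_mod_cast hB)).2)
  have hFxne : Fx.Nonempty := ⟨x, hxFx⟩
  have hmin : ∀ G, IsExposed ℝ P G → x ∈ G → Fx ⊆ G := by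
    intro G hG hxG
    have hGΦ : G ∈ Φx := by
      rw [hΦx, Finset.mem_filter, Set.Finite.mem_toFinset]
      exact ⟨⟨hG, ⟨x, hxG⟩⟩, hxG⟩
    exact Set.sInter_subset_of_mem (by exact_mod_cast hGΦ)
  have hxrel : x ∈ relint Fx := by
    by_contra hxn
    obtain ⟨T', hT'S, hFxT'⟩ := exposed_face_eq hFxexp hFxne
    have hT'ne : (T' : Set E).Nonempty := by
      by_contra h
      rw [Set.not_nonempty_iff_eq_empty] at h
      rw [hFxT', h] at hFxne
      simp at hFxne
    obtain ⟨Gc, hGexp, hxGc, hGne', hGcne⟩ :=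
      exists_proper_subface T' hT'ne (hFxT' ▸ hxFx) (by rw [← hFxT']; exact hxn)
    have hGexp' : IsExposed ℝ Fx Gc := by rw [hFxT']; exact hGexp
    have hGP : IsExposed ℝ P Gc := exposed_trans S hFxexp hFxne hGexp' hGcne
    have hsub := hmin Gc hGP hxGc
    apply hGne'
    apply Set.Subset.antisymm hGexp.subset
    rw [← hFxT']
    exact hsub
  refine ⟨Fx, ⟨⟨hFxexp, hFxne⟩, hxrel⟩, ?_⟩
  rintro G ⟨⟨hGexp, hGne⟩, hxG⟩
  apply Set.Subset.antisymm
  · exact relint_face_subset (S := S) hGexp hFxexp hxG hxFx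
  · exact relint_face_subset (S := S) hFxexp hGexp hxrel (relint_subset G hxG)

theorem euler_general (S : Finset E) (P : Set E) (hP : P = convexHull ℝ (S : Set E))
    (hPne : P.Nonempty) :
    Nat.card {F : Set E // IsExposed ℝ P F ∧ F.Nonempty ∧ Even (finrank ℝ (vectorSpan ℝ F))} =
    Nat.card {F : Set E // IsExposed ℝ P F ∧ F.Nonempty ∧
      ¬ Even (finrank ℝ (vectorSpan ℝ F))} + 1 := by
  classical
  subst hP
  set P : Set E := convexHull ℝ (S : Set E) with hPdef
  have hPcomp : IsCompact P := (S.finite_toSet).isCompact_convexHull ℝ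
  have hfin : {Fc : Set E | IsExposed ℝ P Fc ∧ Fc.Nonempty}.Finite := faces_finite S
  set Φ : Finset (Set E) := hfin.toFinset with hΦ
  have hΦmem : ∀ Fc, Fc ∈ Φ ↔ (IsExposed ℝ P Fc ∧ Fc.Nonempty) := fun Fc =>
    Set.Finite.mem_toFinset hfin
  have hface : ∀ Fc ∈ Φ, GoodPair (relint Fc) ((-1:ℝ) ^ (finrank ℝ (vectorSpan ℝ Fc)))
      ∧ (relint Fc).Nonempty := by
    intro Fc hFc
    rw [hΦmem] at hFc
    obtain ⟨hexp, hne⟩ := hFc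
    obtain ⟨T', hT'S, hFcT'⟩ := exposed_face_eq hexp hne
    have hT'ne : (T' : Set E).Nonempty := by
      by_contra h
      rw [Set.not_nonempty_iff_eq_empty] at h
      rw [hFcT', h] at hne
      simp at hne
    have hzrel : (relint Fc).Nonempty := by
      rw [hFcT']
      exact relint_nonempty_of_polytope T' hT'ne
    obtain ⟨z, hz⟩ := hzrel
    have hconv : Convex ℝ Fc := hexp.convex (convex_convexHull ℝ _)
    have hbd : IsBounded Fc := hPcomp.isBounded.subset hexp.subset
    refine ⟨⟨⟨z, hz⟩, relint_convex hconv, hbd.subset (relint_subset Fc),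
      Or.inr ⟨relint_relOpen hz, ?_⟩⟩, ⟨z, hz⟩⟩
    rw [relint_vectorSpan_eq hz]
  set Ufam : Option (Set E) → Set E := fun o => o.elim P (fun Fc => relint Fc) with hUfam
  set cfam : Option (Set E) → ℝ := fun o => o.elim (-1) (fun _ => 1) with hcfam
  set εfam : Option (Set E) → ℝ :=
    fun o => o.elim 1 (fun Fc => (-1) ^ (finrank ℝ (vectorSpan ℝ Fc))) with hεfam
  set A : Finset (Option (Set E)) := insert none (Φ.image some) with hA
  have hnone : none ∉ Φ.image some := by simp
  have hinj : ∀ x ∈ Φ, ∀ y ∈ Φ, some x = some y → x = y := by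
    intro a _ b _ h
    exact Option.some_injective _ h
  have hgood : ∀ o ∈ A, GoodPair (Ufam o) (εfam o) := by
    intro o ho
    match o with
    | none =>
      exact ⟨hPne, convex_convexHull ℝ _, hPcomp.isBounded, Or.inl ⟨hPcomp.isClosed, rfl⟩⟩
    | some Fc =>
      have hFc : Fc ∈ Φ := by
        rw [hA, Finset.mem_insert] at ho
        rcases ho with h | h
        · exact absurd h (by simp)
        · obtain ⟨G, hG, hGe⟩ := Finset.mem_image.1 h
          rw [← Option.some_injective _ hGe]
          exact hG
      exact (hface Fc hFc).1
  have hzero : ∀ x, ∑ o ∈ A, cfam o * (Ufam o).indicator (fun _ => (1:ℝ)) x = 0 := by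
    intro x
    rw [hA, Finset.sum_insert hnone, Finset.sum_image hinj]
    simp only [hcfam, hUfam, Option.elim_none, Option.elim_some]
    by_cases hx : x ∈ P
    · obtain ⟨Fx, ⟨⟨hFexp, hFne⟩, hFrel⟩, huniq⟩ := exists_unique_face S hx
      have hFxΦ : Fx ∈ Φ := (hΦmem Fx).2 ⟨hFexp, hFne⟩
      have hsum : ∑ Fc ∈ Φ, (1:ℝ) * (relint Fc).indicator (fun _ => (1:ℝ)) x = 1 := by
        rw [Finset.sum_eq_single_of_mem Fx hFxΦ]
        · rw [one_mul, Set.indicator_of_mem hFrel]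
        · intro G hG hGne'
          rw [hΦmem] at hG
          have hnrel : x ∉ relint G := by
            intro hxG
            exact hGne' (huniq G ⟨hG, hxG⟩)
          rw [Set.indicator_of_notMem hnrel, mul_zero]
      rw [hsum, Set.indicator_of_mem hx]
      ring
    · have h1 : P.indicator (fun _ => (1:ℝ)) x = 0 := Set.indicator_of_notMem hx _
      have h2 : ∀ Fc ∈ Φ, (1:ℝ) * (relint Fc).indicator (fun _ => (1:ℝ)) x = 0 := by
        intro Fc hFc
        rw [hΦmem] at hFc
        have : x ∉ relint Fc := fun hxr => hx (hFc.1.subset (relint_subset Fc hxr))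
        rw [Set.indicator_of_notMem this, mul_zero]
      rw [h1, Finset.sum_congr rfl h2]
      simp
  have hkey := key_valuation (finrank ℝ E) E rfl A Ufam cfam εfam hgood hzero
  rw [hA, Finset.sum_insert hnone, Finset.sum_image hinj] at hkey
  simp only [hcfam, hεfam, Option.elim_none, Option.elim_some] at hkey
  have hsum1 : ∑ Fc ∈ Φ, ((-1:ℝ)) ^ (finrank ℝ (vectorSpan ℝ Fc)) = 1 := by
    have : ∑ Fc ∈ Φ, (1:ℝ) * ((-1:ℝ)) ^ (finrank ℝ (vectorSpan ℝ Fc))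
        = ∑ Fc ∈ Φ, ((-1:ℝ)) ^ (finrank ℝ (vectorSpan ℝ Fc)) := by
      apply Finset.sum_congr rfl
      intro Fc _
      ring
    rw [this] at hkey
    linarith
  set Φe := Φ.filter (fun Fc => Even (finrank ℝ (vectorSpan ℝ Fc))) with hΦe
  set Φo := Φ.filter (fun Fc => ¬ Even (finrank ℝ (vectorSpan ℝ Fc))) with hΦo
  have hsplit : (Φe.card : ℝ) - (Φo.card : ℝ) = 1 := by
    rw [← Finset.sum_filter_add_sum_filter_not Φ
      (fun Fc => Even (finrank ℝ (vectorSpan ℝ Fc)))] at hsum1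
    have he : ∑ Fc ∈ Φe, ((-1:ℝ)) ^ (finrank ℝ (vectorSpan ℝ Fc)) = Φe.card := by
      rw [Finset.sum_congr rfl (fun Fc hFc => Even.neg_one_pow (Finset.mem_filter.1 hFc).2)]
      simp
      rfl
    have ho : ∑ Fc ∈ Φo, ((-1:ℝ)) ^ (finrank ℝ (vectorSpan ℝ Fc)) = -(Φo.card : ℝ) := by
      rw [Finset.sum_congr rfl (fun Fc hFc =>
        Odd.neg_one_pow (Nat.not_even_iff_odd.1 (Finset.mem_filter.1 hFc).2))]
      rw [Finset.sum_const, nsmul_eq_mul]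
      ring
    rw [← hΦe, ← hΦo] at hsum1
    rw [he, ho] at hsum1
    linarith
  have hcard : Φe.card = Φo.card + 1 := by
    have : (Φe.card : ℝ) = (Φo.card : ℝ) + 1 := by linarith
    exact_mod_cast this
  have heq1 : Nat.card {F : Set E // IsExposed ℝ P F ∧ F.Nonempty ∧
      Even (finrank ℝ (vectorSpan ℝ F))} = Φe.card := by
    have hset : {F : Set E | IsExposed ℝ P F ∧ F.Nonempty ∧ Even (finrank ℝ (vectorSpan ℝ F))}
        = ↑Φe := by
      ext Fc
      rw [Set.mem_setOf_eq, Finset.coe_filter, Set.mem_setOf_eq, hΦmem]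
      tauto
    calc Nat.card {F : Set E // IsExposed ℝ P F ∧ F.Nonempty ∧
          Even (finrank ℝ (vectorSpan ℝ F))}
        = ({F : Set E | IsExposed ℝ P F ∧ F.Nonempty ∧
            Even (finrank ℝ (vectorSpan ℝ F))} : Set (Set E)).ncard := Nat.card_coe_set_eq _
    _ = (↑Φe : Set (Set E)).ncard := by rw [hset]
    _ = Φe.card := Set.ncard_coe_finset _
  have heq2 : Nat.card {F : Set E // IsExposed ℝ P F ∧ F.Nonempty ∧
      ¬ Even (finrank ℝ (vectorSpan ℝ F))} = Φo.card := by
    have hset : {F : Set E | IsExposed ℝ P F ∧ F.Nonempty ∧ ¬ Even (finrank ℝ (vectorSpan ℝ F))}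
        = ↑Φo := by
      ext Fc
      rw [Set.mem_setOf_eq, Finset.coe_filter, Set.mem_setOf_eq, hΦmem]
      tauto
    calc Nat.card {F : Set E // IsExposed ℝ P F ∧ F.Nonempty ∧
          ¬ Even (finrank ℝ (vectorSpan ℝ F))}
        = ({F : Set E | IsExposed ℝ P F ∧ F.Nonempty ∧
            ¬ Even (finrank ℝ (vectorSpan ℝ F))} : Set (Set E)).ncard := Nat.card_coe_set_eq _
    _ = (↑Φo : Set (Set E)).ncard := by rw [hset]
    _ = Φo.card := Set.ncard_coe_finset _
  rw [heq1, heq2, hcard]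

end Final

/-- Euler's relation: for a `d`-polytope `P` (convex hull of a finite set), the number of
faces of even dimension equals the number of faces of odd dimension, where faces are the
exposed faces (including `P` itself) and the empty face (of dimension `-1`, counted on the
odd side as the extra `+ 1`). -/
theorem euler_relation (d n : ℕ) (S : Finset (EuclideanSpace ℝ (Fin n)))
    (P : Set (EuclideanSpace ℝ (Fin n))) (hP : P = convexHull ℝ (S : Set (EuclideanSpace ℝ (Fin n))))
    (hPne : P.Nonempty)
    (hd : Module.finrank ℝ (vectorSpan ℝ P) = d) :
    Nat.card {F : Set (EuclideanSpace ℝ (Fin n)) //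
        IsExposed ℝ P F ∧ F.Nonempty ∧ Even (Module.finrank ℝ (vectorSpan ℝ F))} =
    Nat.card {F : Set (EuclideanSpace ℝ (Fin n)) //
        IsExposed ℝ P F ∧ F.Nonempty ∧ ¬ Even (Module.finrank ℝ (vectorSpan ℝ F))} + 1 :=
  euler_general S P hP hPne
end
end

section
/- For any positive integer m and any nonnegative integer n, with l^m(C_k) the reversed m-modular face vector of the cyclic polytope C_k = C(k+1+n, k) given by l^m(C_k) = e_1 (I + Q·Σ_{j=0}^{k} h_j A^j) where A = I+Q, Q is the m×m cyclic shift, and h_j = h_j(C_k) as in McMullen's formula, the normalized vectors l^m(C_k)/σ(l^m(C_k)) converge to (1/m, ..., 1/m) as k → ∞, where σ denotes the sum of coordinates. -/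
open Matrix

/-- The `m × m` cyclic shift permutation matrix: entry `1` at `(i, i+1 mod m)`. -/
def cyclicShift (m : ℕ) : Matrix (Fin m) (Fin m) ℝ :=
  Matrix.of fun i j => if (j : ℕ) = ((i : ℕ) + 1) % m then 1 else 0

/-- The unit vector `e₁ = (1, 0, …, 0)`. -/
def e1 (m : ℕ) : Fin m → ℝ := fun i => if (i : ℕ) = 0 then 1 else 0

/-- The `h`-vector of the cyclic polytope `C(k+1+n, k)`:
`h_j = C(n+j, j)` for `j ≤ ⌊k/2⌋` and `h_j = h_{k−j}` for `⌊k/2⌋ < j ≤ k`. -/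
def hcyc (n k j : ℕ) : ℕ :=
  if j ≤ k / 2 then (n + j).choose j else (n + (k - j)).choose (k - j)

/-- The reversed `m`-modular face vector of the cyclic polytope `C(k+1+n, k)`:
`l^m(C_k) = e₁ (I + Q·Σ_{j=0}^{k} h_j A^j)` with `A = I + Q`. -/
noncomputable def lmC (m n k : ℕ) : Fin m → ℝ :=
  e1 m ᵥ* ((1 : Matrix (Fin m) (Fin m) ℝ)
    + cyclicShift m * ∑ j ∈ Finset.range (k + 1),
        (hcyc n k j : ℝ) • ((1 : Matrix (Fin m) (Fin m) ℝ) + cyclicShift m) ^ j)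

open Finset
open Fin.CommRing

section Aux
variable {m : ℕ} [NeZero m]

lemma fin_val_add_one (i : Fin m) : ((i + 1 : Fin m) : ℕ) = ((i : ℕ) + 1) % m := by
  rw [Fin.add_def]
  simp [Nat.add_mod]

lemma vecMul_cyclicShift (v : Fin m → ℝ) (j : Fin m) :
    (v ᵥ* cyclicShift m) j = v (j - 1) := by
  classical
  rw [Matrix.vecMul]
  show ∑ i, v i * cyclicShift m i j = _
  rw [Finset.sum_eq_single (j - 1)]
  · have : (j : ℕ) = (((j - 1 : Fin m) : ℕ) + 1) % m := by
      conv_lhs => rw [show j = (j - 1) + 1 by ring]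
      exact fin_val_add_one _
    simp [cyclicShift, ← this]
  · intro i _ hi
    have : (j : ℕ) ≠ ((i : ℕ) + 1) % m := by
      intro h
      apply hi
      have : j = i + 1 := Fin.ext (by rw [fin_val_add_one]; exact h)
      rw [this]; ring
    simp [cyclicShift, this]
  · simp
end Aux

section Walk
variable {m : ℕ} [NeZero m]

noncomputable def uu (m : ℕ) (j : ℕ) : Fin m → ℝ :=
  e1 m ᵥ* ((1 : Matrix (Fin m) (Fin m) ℝ) + cyclicShift m) ^ j

omit [NeZero m] in
lemma uu_zero : uu m 0 = e1 m := by simp [uu]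

lemma uu_succ (j : ℕ) (i : Fin m) : uu m (j + 1) i = uu m j i + uu m j (i - 1) := by
  rw [uu, pow_succ, ← Matrix.vecMul_vecMul]
  rw [Matrix.vecMul_add, Matrix.vecMul_one]
  show (uu m j) i + (uu m j ᵥ* cyclicShift m) i = _
  rw [vecMul_cyclicShift]

lemma uu_nonneg (j : ℕ) (i : Fin m) : 0 ≤ uu m j i := by
  induction j generalizing i with
  | zero => rw [uu_zero]; unfold e1; positivity
  | succ j ih => rw [uu_succ]; exact add_nonneg (ih i) (ih (i - 1))

lemma sum_uu (j : ℕ) : ∑ i, uu m j i = 2 ^ j := by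
  induction j with
  | zero =>
    rw [uu_zero, Finset.sum_eq_single (0 : Fin m)]
    · simp [e1]
    · intro i _ hi
      simp only [e1]
      rw [if_neg]
      intro h; exact hi (Fin.ext (by simp [h]))
    · simp
  | succ j ih =>
    have h2 : ∑ i : Fin m, uu m j (i - 1) = ∑ i, uu m j i :=
      Fintype.sum_equiv (Equiv.subRight (1 : Fin m)) _ _ (fun i => rfl)
    simp only [uu_succ, Finset.sum_add_distrib, h2, ih]
    ring

lemma vecMul_cyclicShift_pow (v : Fin m → ℝ) (t : ℕ) (i : Fin m) :
    (v ᵥ* (cyclicShift m) ^ t) i = v (i - (t : Fin m)) := by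
  induction t generalizing i with
  | zero => simp
  | succ t ih =>
    rw [pow_succ, ← Matrix.vecMul_vecMul]
    rw [show ((v ᵥ* cyclicShift m ^ t) ᵥ* cyclicShift m) i
        = (v ᵥ* cyclicShift m ^ t) (i - 1) from vecMul_cyclicShift _ _, ih]
    congr 1
    push_cast
    ring

lemma uu_add (j t : ℕ) (i : Fin m) :
    uu m (j + t) i = ∑ s ∈ Finset.range (t + 1), (t.choose s : ℝ) * uu m j (i - (s : Fin m)) := by
  have hA : ((1 : Matrix (Fin m) (Fin m) ℝ) + cyclicShift m) ^ t
      = ∑ s ∈ Finset.range (t + 1), (t.choose s : ℝ) • (cyclicShift m) ^ s := by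
    rw [add_comm (1 : Matrix (Fin m) (Fin m) ℝ)]
    rw [(Commute.one_right (cyclicShift m)).add_pow]
    refine Finset.sum_congr rfl fun s hs => ?_
    rw [one_pow, mul_one]
    rw [← (Nat.cast_commute (t.choose s) (cyclicShift m ^ s)).eq, ← nsmul_eq_mul,
      Nat.cast_smul_eq_nsmul]
  have hsum : ∀ (S : Finset ℕ) (f : ℕ → Matrix (Fin m) (Fin m) ℝ) (v : Fin m → ℝ),
      v ᵥ* (∑ s ∈ S, f s) = ∑ s ∈ S, v ᵥ* f s := by
    intro S f v
    induction S using Finset.induction_on with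
    | empty => simp [Matrix.vecMul_zero]
    | insert _ _ h ih => rw [Finset.sum_insert h, Finset.sum_insert h, Matrix.vecMul_add, ih]
  rw [uu, pow_add, ← Matrix.vecMul_vecMul, ← uu, hA, hsum]
  rw [Finset.sum_apply]
  refine Finset.sum_congr rfl fun s hs => ?_
  have hh : uu m j ᵥ* ((t.choose s : ℝ) • cyclicShift m ^ s)
      = (t.choose s : ℝ) • (uu m j ᵥ* cyclicShift m ^ s) := by
    ext x
    simp [Matrix.vecMul, dotProduct, Finset.mul_sum, mul_left_comm]
  rw [hh, Pi.smul_apply, vecMul_cyclicShift_pow, smul_eq_mul]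

end Walk

section Spread
variable {m : ℕ} [NeZero m]

noncomputable def ww (m : ℕ) (j : ℕ) : Fin m → ℝ := fun i => uu m j i / 2 ^ j

lemma finm_nonempty : (Finset.univ : Finset (Fin m)).Nonempty :=
  ⟨⟨0, Nat.pos_of_ne_zero (NeZero.ne m)⟩, Finset.mem_univ _⟩

noncomputable def Mx (m : ℕ) [NeZero m] (j : ℕ) : ℝ :=
  Finset.univ.sup' finm_nonempty (ww m j)

noncomputable def mn (m : ℕ) [NeZero m] (j : ℕ) : ℝ :=
  Finset.univ.inf' finm_nonempty (ww m j)

lemma ww_le_Mx (j : ℕ) (i : Fin m) : ww m j i ≤ Mx m j :=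
  Finset.le_sup' _ (Finset.mem_univ i)

lemma mn_le_ww (j : ℕ) (i : Fin m) : mn m j ≤ ww m j i :=
  Finset.inf'_le _ (Finset.mem_univ i)

lemma mn_le_Mx (j : ℕ) : mn m j ≤ Mx m j :=
  le_trans (mn_le_ww j ⟨0, Nat.pos_of_ne_zero (NeZero.ne m)⟩)
    (ww_le_Mx j ⟨0, Nat.pos_of_ne_zero (NeZero.ne m)⟩)

lemma sum_ww (j : ℕ) : ∑ i, ww m j i = 1 := by
  unfold ww
  rw [← Finset.sum_div, sum_uu]
  field_simp

lemma ww_succ (j : ℕ) (i : Fin m) : ww m (j + 1) i = (ww m j i + ww m j (i - 1)) / 2 := by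
  unfold ww
  rw [uu_succ, pow_succ]
  field_simp

lemma Mx_succ_le (j : ℕ) : Mx m (j + 1) ≤ Mx m j := by
  apply Finset.sup'_le
  intro i _
  rw [ww_succ]
  have h1 := ww_le_Mx (m := m) j i
  have h2 := ww_le_Mx (m := m) j (i - 1)
  linarith

lemma le_mn_succ (j : ℕ) : mn m j ≤ mn m (j + 1) := by
  apply Finset.le_inf'
  intro i _
  rw [ww_succ]
  have h1 := mn_le_ww (m := m) j i
  have h2 := mn_le_ww (m := m) j (i - 1)
  linarith

lemma spread_antitone : Antitone (fun j => Mx m j - mn m j) := by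
  apply antitone_nat_of_succ_le
  intro j
  have h1 := Mx_succ_le (m := m) j
  have h2 := le_mn_succ (m := m) j
  show Mx m (j+1) - mn m (j+1) ≤ Mx m j - mn m j
  linarith

lemma ww_add_m (j : ℕ) (i : Fin m) :
    ww m (j + m) i = (2 ^ m)⁻¹ * ∑ s ∈ Finset.range (m + 1),
      (m.choose s : ℝ) * ww m j (i - (s : Fin m)) := by
  unfold ww
  rw [uu_add, pow_add, Finset.mul_sum, Finset.sum_div]
  refine Finset.sum_congr rfl fun s hs => ?_
  ring

omit [NeZero m] in
lemma sum_choose_real : ∑ s ∈ Finset.range (m + 1), (m.choose s : ℝ) = 2 ^ m := by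
  rw [← Nat.cast_sum, Nat.sum_range_choose]
  push_cast
  ring

lemma two_pow_inv_pos : (0:ℝ) < ((2:ℝ) ^ m)⁻¹ := by positivity

lemma contraction_lo (j : ℕ) (i : Fin m) :
    mn m j + ((2:ℝ) ^ m)⁻¹ * (Mx m j - mn m j) ≤ ww m (j + m) i := by
  obtain ⟨b, -, hb⟩ := Finset.exists_mem_eq_sup' (finm_nonempty (m := m)) (ww m j)
  have hb' : Mx m j = ww m j b := hb
  set t : ℕ := ((i - b : Fin m) : ℕ) with ht_def
  have ht : t ∈ Finset.range (m + 1) :=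
    Finset.mem_range.mpr (lt_of_lt_of_le (i - b).isLt (Nat.le_succ m))
  have hcast : ((t : ℕ) : Fin m) = i - b := Fin.cast_val_eq_self _
  have hc1 : (1:ℝ) ≤ (m.choose t : ℝ) := by
    have h := Nat.choose_pos (Nat.lt_succ_iff.mp (Finset.mem_range.mp ht))
    exact_mod_cast h
  have hsplit : ∑ s ∈ Finset.range (m + 1), (m.choose s : ℝ) * ww m j (i - (s : Fin m))
      = (m.choose t : ℝ) * ww m j b + ∑ s ∈ (Finset.range (m + 1)).erase t,
          (m.choose s : ℝ) * ww m j (i - (s : Fin m)) := by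
    rw [← Finset.add_sum_erase _ _ ht, hcast, sub_sub_cancel]
  have hcsplit : (m.choose t : ℝ) + ∑ s ∈ (Finset.range (m + 1)).erase t, (m.choose s : ℝ)
      = 2 ^ m := by
    rw [Finset.add_sum_erase _ (fun s => (m.choose s : ℝ)) ht, sum_choose_real]
  have hrest : (∑ s ∈ (Finset.range (m + 1)).erase t, (m.choose s : ℝ)) * mn m j
      ≤ ∑ s ∈ (Finset.range (m + 1)).erase t, (m.choose s : ℝ) * ww m j (i - (s : Fin m)) := by
    rw [Finset.sum_mul]
    refine Finset.sum_le_sum fun s _ => ?_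
    exact mul_le_mul_of_nonneg_left (mn_le_ww j _) (Nat.cast_nonneg _)
  have hsum_c : ∑ s ∈ (Finset.range (m + 1)).erase t, (m.choose s : ℝ)
      = 2 ^ m - (m.choose t : ℝ) := by linarith
  rw [hsum_c] at hrest
  have hS : (m.choose t : ℝ) * Mx m j + (2 ^ m - (m.choose t : ℝ)) * mn m j
      ≤ ∑ s ∈ Finset.range (m + 1), (m.choose s : ℝ) * ww m j (i - (s : Fin m)) := by
    rw [hsplit, hb']
    linarith
  rw [ww_add_m]
  have hinv : ((2:ℝ) ^ m)⁻¹ * 2 ^ m = 1 := by field_simp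
  have hd : mn m j ≤ Mx m j := mn_le_Mx j
  have hP : 0 ≤ ((2:ℝ) ^ m)⁻¹ * ((m.choose t : ℝ) - 1) * (Mx m j - mn m j) :=
    mul_nonneg (mul_nonneg (two_pow_inv_pos (m := m)).le (by linarith)) (by linarith)
  have hinvmn : ((2:ℝ) ^ m)⁻¹ * 2 ^ m * mn m j = mn m j := by rw [hinv, one_mul]
  nlinarith [mul_le_mul_of_nonneg_left hS (two_pow_inv_pos (m := m)).le, hP, hinvmn]

lemma contraction_hi (j : ℕ) (i : Fin m) :
    ww m (j + m) i ≤ Mx m j - ((2:ℝ) ^ m)⁻¹ * (Mx m j - mn m j) := by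
  obtain ⟨b, -, hb⟩ := Finset.exists_mem_eq_inf' (finm_nonempty (m := m)) (ww m j)
  have hb' : mn m j = ww m j b := hb
  set t : ℕ := ((i - b : Fin m) : ℕ) with ht_def
  have ht : t ∈ Finset.range (m + 1) :=
    Finset.mem_range.mpr (lt_of_lt_of_le (i - b).isLt (Nat.le_succ m))
  have hcast : ((t : ℕ) : Fin m) = i - b := Fin.cast_val_eq_self _
  have hc1 : (1:ℝ) ≤ (m.choose t : ℝ) := by
    have h := Nat.choose_pos (Nat.lt_succ_iff.mp (Finset.mem_range.mp ht))
    exact_mod_cast h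
  have hsplit : ∑ s ∈ Finset.range (m + 1), (m.choose s : ℝ) * ww m j (i - (s : Fin m))
      = (m.choose t : ℝ) * ww m j b + ∑ s ∈ (Finset.range (m + 1)).erase t,
          (m.choose s : ℝ) * ww m j (i - (s : Fin m)) := by
    rw [← Finset.add_sum_erase _ _ ht, hcast, sub_sub_cancel]
  have hcsplit : (m.choose t : ℝ) + ∑ s ∈ (Finset.range (m + 1)).erase t, (m.choose s : ℝ)
      = 2 ^ m := by
    rw [Finset.add_sum_erase _ (fun s => (m.choose s : ℝ)) ht, sum_choose_real]
  have hrest : ∑ s ∈ (Finset.range (m + 1)).erase t, (m.choose s : ℝ) * ww m j (i - (s : Fin m))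
      ≤ (∑ s ∈ (Finset.range (m + 1)).erase t, (m.choose s : ℝ)) * Mx m j := by
    rw [Finset.sum_mul]
    refine Finset.sum_le_sum fun s _ => ?_
    exact mul_le_mul_of_nonneg_left (ww_le_Mx j _) (Nat.cast_nonneg _)
  have hsum_c : ∑ s ∈ (Finset.range (m + 1)).erase t, (m.choose s : ℝ)
      = 2 ^ m - (m.choose t : ℝ) := by linarith
  rw [hsum_c] at hrest
  have hS : ∑ s ∈ Finset.range (m + 1), (m.choose s : ℝ) * ww m j (i - (s : Fin m))
      ≤ (m.choose t : ℝ) * mn m j + (2 ^ m - (m.choose t : ℝ)) * Mx m j := by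
    rw [hsplit, hb']
    linarith
  rw [ww_add_m]
  have hinv : ((2:ℝ) ^ m)⁻¹ * 2 ^ m = 1 := by field_simp
  have hd : mn m j ≤ Mx m j := mn_le_Mx j
  have hP : 0 ≤ ((2:ℝ) ^ m)⁻¹ * ((m.choose t : ℝ) - 1) * (Mx m j - mn m j) :=
    mul_nonneg (mul_nonneg (two_pow_inv_pos (m := m)).le (by linarith)) (by linarith)
  have hinvMx : ((2:ℝ) ^ m)⁻¹ * 2 ^ m * Mx m j = Mx m j := by rw [hinv, one_mul]
  nlinarith [mul_le_mul_of_nonneg_left hS (two_pow_inv_pos (m := m)).le, hP, hinvMx]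

lemma spread_contract (j : ℕ) :
    Mx m (j + m) - mn m (j + m)
      ≤ (1 - 2 * ((2:ℝ) ^ m)⁻¹) * (Mx m j - mn m j) := by
  have h1 : Mx m (j + m) ≤ Mx m j - ((2:ℝ) ^ m)⁻¹ * (Mx m j - mn m j) :=
    Finset.sup'_le _ _ fun i _ => contraction_hi j i
  have h2 : mn m j + ((2:ℝ) ^ m)⁻¹ * (Mx m j - mn m j) ≤ mn m (j + m) :=
    Finset.le_inf' _ _ fun i _ => contraction_lo j i
  linarith

lemma spread_le (j : ℕ) :
    Mx m j - mn m j ≤ (1 - 2 * ((2:ℝ) ^ m)⁻¹) ^ (j / m) := by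
  have hθ0 : (0:ℝ) ≤ 1 - 2 * ((2:ℝ) ^ m)⁻¹ := by
    have h2 : (2:ℝ) ≤ 2 ^ m := by
      calc (2:ℝ) = 2 ^ 1 := (pow_one 2).symm
      _ ≤ 2 ^ m := by
        apply pow_le_pow_right₀ (by norm_num)
        exact Nat.pos_of_ne_zero (NeZero.ne m)
    have hpos : (0:ℝ) < 2 ^ m := by positivity
    rw [sub_nonneg]
    rw [mul_inv_le_iff₀ hpos]
    linarith
  have hδ0 : Mx m 0 - mn m 0 ≤ 1 := by
    have h1 : Mx m 0 ≤ 1 := by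
      apply Finset.sup'_le
      intro i _
      simp only [ww, pow_zero, div_one, uu_zero, e1]
      split <;> norm_num
    have h2 : 0 ≤ mn m 0 := by
      apply Finset.le_inf'
      intro i _
      simp only [ww, pow_zero, div_one, uu_zero, e1]
      split <;> norm_num
    linarith
  induction j using Nat.strong_induction_on with
  | _ j ih =>
    rcases lt_or_ge j m with hj | hj
    · rw [Nat.div_eq_of_lt hj, pow_zero]
      calc Mx m j - mn m j ≤ Mx m 0 - mn m 0 := spread_antitone (Nat.zero_le j)
      _ ≤ 1 := hδ0
    · have hm0 : 0 < m := Nat.pos_of_ne_zero (NeZero.ne m)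
      have hlt : j - m < j := Nat.sub_lt (lt_of_lt_of_le hm0 hj) hm0
      have hrec := ih (j - m) hlt
      have hstep := spread_contract (m := m) (j - m)
      rw [Nat.sub_add_cancel hj] at hstep
      have hdiv : j / m = (j - m) / m + 1 := by
        rw [Nat.div_eq_sub_div hm0 hj]
      rw [hdiv, pow_succ]
      calc Mx m j - mn m j ≤ (1 - 2 * ((2:ℝ) ^ m)⁻¹) * (Mx m (j - m) - mn m (j - m)) := hstep
      _ ≤ (1 - 2 * ((2:ℝ) ^ m)⁻¹) ^ ((j - m) / m) * (1 - 2 * ((2:ℝ) ^ m)⁻¹) := by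
          rw [mul_comm ((1 - 2 * ((2:ℝ) ^ m)⁻¹) ^ ((j - m) / m))]
          exact mul_le_mul_of_nonneg_left hrec hθ0

lemma ww_near_uniform (j : ℕ) (i : Fin m) :
    |ww m j i - (m : ℝ)⁻¹| ≤ Mx m j - mn m j := by
  have hm0 : 0 < m := Nat.pos_of_ne_zero (NeZero.ne m)
  have hcard : (Finset.univ : Finset (Fin m)).card = m := Finset.card_fin m
  have hlo : (m : ℝ) * mn m j ≤ 1 := by
    have := Finset.card_nsmul_le_sum (Finset.univ : Finset (Fin m)) (ww m j) (mn m j)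
      (fun i _ => mn_le_ww j i)
    rw [sum_ww, hcard, nsmul_eq_mul] at this
    exact this
  have hhi : (1:ℝ) ≤ (m : ℝ) * Mx m j := by
    have := Finset.sum_le_card_nsmul (Finset.univ : Finset (Fin m)) (ww m j) (Mx m j)
      (fun i _ => ww_le_Mx j i)
    rw [sum_ww, hcard, nsmul_eq_mul] at this
    exact this
  have hmpos : (0:ℝ) < m := by exact_mod_cast hm0
  have h1 : mn m j ≤ (m:ℝ)⁻¹ := by
    rw [← mul_le_mul_iff_right₀ hmpos, mul_inv_cancel₀ hmpos.ne']
    exact hlo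
  have h2 : (m:ℝ)⁻¹ ≤ Mx m j := by
    rw [← mul_le_mul_iff_right₀ hmpos, mul_inv_cancel₀ hmpos.ne']
    exact hhi
  have h3 := mn_le_ww j i
  have h4 := ww_le_Mx j i
  rw [abs_sub_le_iff]
  constructor <;> linarith

end Spread

section Formula
variable {m : ℕ} [NeZero m]

lemma vecMul_finset_sum (S : Finset ℕ) (f : ℕ → Matrix (Fin m) (Fin m) ℝ) (v : Fin m → ℝ) :
    v ᵥ* (∑ s ∈ S, f s) = ∑ s ∈ S, v ᵥ* f s := by
  induction S using Finset.induction_on with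
  | empty => simp [Matrix.vecMul_zero]
  | insert _ _ h ih => rw [Finset.sum_insert h, Finset.sum_insert h, Matrix.vecMul_add, ih]

lemma vecMul_smul_matrix (c : ℝ) (M : Matrix (Fin m) (Fin m) ℝ) (v : Fin m → ℝ) :
    v ᵥ* (c • M) = c • (v ᵥ* M) := by
  ext x
  simp [Matrix.vecMul, dotProduct, Finset.mul_sum, mul_left_comm]

lemma lmC_apply (n k : ℕ) (i : Fin m) :
    lmC m n k i = e1 m i
      + ∑ j ∈ Finset.range (k + 1), (hcyc n k j : ℝ) * uu m j (i - 1) := by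
  unfold lmC
  have hcomm : cyclicShift m * (∑ j ∈ Finset.range (k + 1),
        (hcyc n k j : ℝ) • ((1 : Matrix (Fin m) (Fin m) ℝ) + cyclicShift m) ^ j)
      = (∑ j ∈ Finset.range (k + 1),
        (hcyc n k j : ℝ) • ((1 : Matrix (Fin m) (Fin m) ℝ) + cyclicShift m) ^ j)
        * cyclicShift m := by
    have h1 : Commute (cyclicShift m) ((1 : Matrix (Fin m) (Fin m) ℝ) + cyclicShift m) :=
      (Commute.one_right _).add_right (Commute.refl _)
    exact (Commute.sum_right _ _ _ fun j _ => ((h1.pow_right j).smul_right _)).eq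
  rw [Matrix.vecMul_add, Matrix.vecMul_one, hcomm, ← Matrix.vecMul_vecMul, Pi.add_apply,
    vecMul_cyclicShift, vecMul_finset_sum, Finset.sum_apply]
  congr 1
  refine Finset.sum_congr rfl fun j _ => ?_
  rw [vecMul_smul_matrix, Pi.smul_apply, smul_eq_mul, ← uu]

lemma sum_lmC (n k : ℕ) :
    ∑ i, lmC m n k i = 1 + ∑ j ∈ Finset.range (k + 1), (hcyc n k j : ℝ) * 2 ^ j := by
  simp only [lmC_apply, Finset.sum_add_distrib]
  congr 1
  · rw [Finset.sum_eq_single (0 : Fin m)]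
    · simp [e1]
    · intro i _ hi
      simp only [e1]
      rw [if_neg]
      intro h; exact hi (Fin.ext (by simp [h]))
    · simp
  · rw [Finset.sum_comm]
    refine Finset.sum_congr rfl fun j _ => ?_
    rw [← Finset.mul_sum]
    congr 1
    rw [← sum_uu (m := m) j]
    exact Fintype.sum_equiv (Equiv.subRight (1 : Fin m)) _ _ (fun i => rfl)

end Formula

section Hcyc

lemma hcyc_symm (n k j : ℕ) (hj : j ≤ k) : hcyc n k (k - j) = hcyc n k j := by
  unfold hcyc
  split_ifs with h1 h2 h2
  · have : k - j = j := by omega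
    rw [this]
  · rfl
  · have : k - (k - j) = j := by omega
    rw [this]
  · omega

lemma hcyc_pos (n k j : ℕ) : 0 < hcyc n k j := by
  unfold hcyc
  split_ifs <;> exact Nat.choose_pos (Nat.le_add_left _ _)

lemma hcyc_k (n k : ℕ) : hcyc n k k = 1 := by
  unfold hcyc
  split_ifs with h
  · have hk : k = 0 := by omega
    subst hk
    simp
  · simp

end Hcyc

section Final

lemma theta_pow_div (m j : ℕ) (hm : 0 < m) {θ ρ : ℝ} (hθpos : 0 < θ)
    (hρpos : 0 < ρ) (hρ1 : ρ ≤ 1) (hρm : ρ ^ m = θ) :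
    θ ^ (j / m) ≤ θ⁻¹ * ρ ^ j := by
  have hj : j ≤ m * (j / m) + m := by
    calc j = m * (j / m) + j % m := (Nat.div_add_mod j m).symm
    _ ≤ m * (j / m) + m := Nat.add_le_add_left (Nat.mod_lt _ hm).le _
  have h1 : ρ ^ (m * (j / m) + m) ≤ ρ ^ j := pow_le_pow_of_le_one hρpos.le hρ1 hj
  rw [pow_add, pow_mul, hρm] at h1
  rw [inv_mul_eq_div, le_div_iff₀ hθpos]
  exact h1

lemma term_bound (n k j : ℕ) (hj : j ≤ k) {ρ : ℝ} (hρpos : 0 < ρ) (hρ1 : ρ ≤ 1)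
    (h2ρ : 1 ≤ 2 * ρ) :
    (hcyc n k j : ℝ) * 2 ^ j * ρ ^ j
      ≤ (∑ j' ∈ Finset.range (k + 1), (hcyc n k j' : ℝ) * 2 ^ j') * ρ ^ (k / 2) := by
  set H : ℝ := ∑ j' ∈ Finset.range (k + 1), (hcyc n k j' : ℝ) * 2 ^ j' with hHdef
  have hterm_nonneg : ∀ j' ∈ Finset.range (k + 1), (0:ℝ) ≤ (hcyc n k j' : ℝ) * 2 ^ j' :=
    fun j' _ => by positivity
  have hH1 : (hcyc n k j : ℝ) * 2 ^ j ≤ H :=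
    Finset.single_le_sum hterm_nonneg (Finset.mem_range.mpr (Nat.lt_succ_of_le hj))
  have hH2 : (hcyc n k j : ℝ) * 2 ^ (k - j) ≤ H := by
    have h := Finset.single_le_sum hterm_nonneg
      (Finset.mem_range.mpr (Nat.lt_succ_of_le (Nat.sub_le k j)))
    rw [hcyc_symm n k j hj] at h
    exact h
  have hHpos : (0:ℝ) ≤ H := le_trans (by positivity) hH1
  rcases le_or_gt (2 * j) k with hcase | hcase
  · have hd : k - j = j + (k - 2 * j) := by omega
    have hkj : k / 2 ≤ k - j := by omega
    set d := k - 2 * j with hddef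
    have e1' : ρ ^ j ≤ 2 ^ d * ρ ^ (k - j) := by
      have hsplit : ρ ^ (k - j) = ρ ^ j * ρ ^ d := by rw [hd, pow_add]
      rw [hsplit]
      calc ρ ^ j = 1 * ρ ^ j := (one_mul _).symm
      _ ≤ (2 * ρ) ^ d * ρ ^ j := by
          refine mul_le_mul_of_nonneg_right ?_ (pow_nonneg hρpos.le j)
          calc (1:ℝ) = 1 ^ d := (one_pow d).symm
          _ ≤ (2 * ρ) ^ d := pow_le_pow_left₀ (by norm_num) h2ρ d
      _ = 2 ^ d * (ρ ^ j * ρ ^ d) := by rw [mul_pow]; ring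
    have e2 : ρ ^ (k - j) ≤ ρ ^ (k / 2) := pow_le_pow_of_le_one hρpos.le hρ1 hkj
    calc (hcyc n k j : ℝ) * 2 ^ j * ρ ^ j
        ≤ (hcyc n k j : ℝ) * 2 ^ j * (2 ^ d * ρ ^ (k - j)) := by
          refine mul_le_mul_of_nonneg_left e1' (by positivity)
    _ = ((hcyc n k j : ℝ) * 2 ^ (k - j)) * ρ ^ (k - j) := by rw [hd, pow_add]; ring
    _ ≤ H * ρ ^ (k - j) := mul_le_mul_of_nonneg_right hH2 (pow_nonneg hρpos.le _)
    _ ≤ H * ρ ^ (k / 2) := mul_le_mul_of_nonneg_left e2 hHpos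
  · have hk2 : k / 2 ≤ j := by omega
    calc (hcyc n k j : ℝ) * 2 ^ j * ρ ^ j
        ≤ H * ρ ^ j := mul_le_mul_of_nonneg_right hH1 (pow_nonneg hρpos.le _)
    _ ≤ H * ρ ^ (k / 2) :=
        mul_le_mul_of_nonneg_left (pow_le_pow_of_le_one hρpos.le hρ1 hk2) hHpos

end Final

/-- The normalized reversed `m`-modular face vectors of cyclic polytopes converge to the
uniform vector `(1/m, …, 1/m)`. -/
theorem lmC_tendsto_uniform (m n : ℕ) (hm : 0 < m) :
    Filter.Tendsto (fun k : ℕ => (∑ i, lmC m n k i)⁻¹ • lmC m n k)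
      Filter.atTop (nhds (fun _ : Fin m => (m : ℝ)⁻¹)) := by
  haveI : NeZero m := ⟨hm.ne'⟩
  set H : ℕ → ℝ := fun k => ∑ j ∈ Finset.range (k + 1), (hcyc n k j : ℝ) * 2 ^ j with hHdef
  have hHk : ∀ k, (2:ℝ) ^ k ≤ H k := by
    intro k
    rw [hHdef]
    have h1 : (hcyc n k k : ℝ) * 2 ^ k = 2 ^ k := by rw [hcyc_k]; norm_num
    calc (2:ℝ) ^ k = (hcyc n k k : ℝ) * 2 ^ k := h1.symm
    _ ≤ ∑ j ∈ Finset.range (k + 1), (hcyc n k j : ℝ) * 2 ^ j :=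
        Finset.single_le_sum (f := fun j => (hcyc n k j : ℝ) * 2 ^ j)
          (fun j _ => by positivity) (Finset.self_mem_range_succ k)
  have hH0 : ∀ k, (0:ℝ) ≤ H k := fun k => le_trans (by positivity) (hHk k)
  have hσ : ∀ k, ∑ i, lmC m n k i = 1 + H k := fun k => sum_lmC n k
  have hσpos : ∀ k, (0:ℝ) < 1 + H k := fun k => by have := hH0 k; linarith
  rcases Nat.lt_or_ge m 2 with h1m | h2m
  · -- m = 1
    have hm1 : m = 1 := by omega
    subst hm1
    have heq : (fun k : ℕ => (∑ i, lmC 1 n k i)⁻¹ • lmC 1 n k)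
        = fun _ : ℕ => (fun _ : Fin 1 => ((1:ℕ) : ℝ)⁻¹) := by
      funext k i
      have hi : i = 0 := Subsingleton.elim _ _
      have hsum : ∑ i', lmC 1 n k i' = lmC 1 n k 0 := Fin.sum_univ_one _
      have hpos : 0 < lmC 1 n k 0 := by
        rw [← hsum, hσ k]; exact hσpos k
      rw [Pi.smul_apply, smul_eq_mul, hi, hsum, inv_mul_cancel₀ hpos.ne',
        Nat.cast_one, inv_one]
    rw [heq]
    exact tendsto_const_nhds
  · -- m ≥ 2
    set θ : ℝ := 1 - 2 * ((2:ℝ) ^ m)⁻¹ with hθdef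
    have h4 : (4:ℝ) ≤ 2 ^ m := by
      calc (4:ℝ) = 2 ^ 2 := by norm_num
      _ ≤ 2 ^ m := pow_le_pow_right₀ (by norm_num) h2m
    have hinv4 : ((2:ℝ) ^ m)⁻¹ ≤ 4⁻¹ := by
      apply inv_anti₀ (by norm_num) h4
    have hθlo : (1/2 : ℝ) ≤ θ := by rw [hθdef]; linarith
    have hθpos : (0:ℝ) < θ := lt_of_lt_of_le (by norm_num) hθlo
    have hθ1 : θ < 1 := by
      have : (0:ℝ) < 2 * ((2:ℝ) ^ m)⁻¹ := by positivity
      rw [hθdef]; linarith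
    set ρ : ℝ := θ ^ ((m:ℝ))⁻¹ with hρdef
    have hmR : (0:ℝ) < m := by exact_mod_cast hm
    have hρpos : 0 < ρ := Real.rpow_pos_of_pos hθpos _
    have hρ1 : ρ < 1 := Real.rpow_lt_one hθpos.le hθ1 (by positivity)
    have hρm : ρ ^ m = θ := by
      rw [hρdef, ← Real.rpow_natCast (θ ^ ((m:ℝ))⁻¹) m, ← Real.rpow_mul hθpos.le,
        inv_mul_cancel₀ hmR.ne', Real.rpow_one]
    have hρhalf : (1/2 : ℝ) ≤ ρ := by
      by_contra hcon
      push_neg at hcon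
      have h1 : ρ ^ m < (1/2 : ℝ) ^ m := pow_lt_pow_left₀ hcon hρpos.le hm.ne'
      have h2 : ((1:ℝ)/2) ^ m ≤ 1/2 := by
        calc ((1:ℝ)/2) ^ m ≤ (1/2 : ℝ) ^ 1 :=
          pow_le_pow_of_le_one (by norm_num) (by norm_num) hm
        _ = 1/2 := pow_one _
      rw [hρm] at h1
      linarith
    have h2ρ : (1:ℝ) ≤ 2 * ρ := by linarith
    -- key coordinatewise bound
    have key : ∀ (k : ℕ) (i : Fin m), |(1 + H k)⁻¹ * lmC m n k i - (m:ℝ)⁻¹|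
        ≤ ((1:ℝ)/2) ^ k + θ⁻¹ * (k + 1) * ρ ^ (k / 2) := by
      intro k i
      have hσp := hσpos k
      have hmain : |lmC m n k i - (1 + H k) * (m:ℝ)⁻¹|
          ≤ 1 + θ⁻¹ * (k + 1) * ρ ^ (k / 2) * H k := by
        have hdecomp : lmC m n k i - (1 + H k) * (m:ℝ)⁻¹
            = (e1 m i - (m:ℝ)⁻¹) + ∑ j ∈ Finset.range (k + 1),
                ((hcyc n k j : ℝ) * uu m j (i - 1) - (hcyc n k j : ℝ) * 2 ^ j * (m:ℝ)⁻¹) := by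
          have hexp : (1 + H k) * (m:ℝ)⁻¹
              = (m:ℝ)⁻¹ + ∑ j ∈ Finset.range (k + 1), (hcyc n k j : ℝ) * 2 ^ j * (m:ℝ)⁻¹ := by
            rw [hHdef, add_mul, one_mul, Finset.sum_mul]
          rw [lmC_apply, hexp, Finset.sum_sub_distrib]
          ring
        rw [hdecomp]
        refine (abs_add_le _ _).trans ?_
        have hminv1 : (m:ℝ)⁻¹ ≤ 1 := by
          rw [inv_le_one_iff₀]
          right
          exact_mod_cast hm
        have he1 : |e1 m i - (m:ℝ)⁻¹| ≤ 1 := by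
          have hminv0 : (0:ℝ) < (m:ℝ)⁻¹ := by positivity
          unfold e1
          split_ifs <;> (rw [abs_le]; constructor <;> linarith)
        have hsum_bd : |∑ j ∈ Finset.range (k + 1),
              ((hcyc n k j : ℝ) * uu m j (i - 1) - (hcyc n k j : ℝ) * 2 ^ j * (m:ℝ)⁻¹)|
            ≤ θ⁻¹ * (k + 1) * ρ ^ (k / 2) * H k := by
          refine (Finset.abs_sum_le_sum_abs _ _).trans ?_
          have hterm : ∀ j ∈ Finset.range (k + 1),
              |(hcyc n k j : ℝ) * uu m j (i - 1) - (hcyc n k j : ℝ) * 2 ^ j * (m:ℝ)⁻¹|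
                ≤ θ⁻¹ * (H k * ρ ^ (k / 2)) := by
            intro j hj
            have hj' : j ≤ k := Nat.lt_succ_iff.mp (Finset.mem_range.mp hj)
            have h2j : (0:ℝ) < 2 ^ j := by positivity
            have ha : |uu m j (i - 1) - 2 ^ j * (m:ℝ)⁻¹| ≤ 2 ^ j * θ ^ (j / m) := by
              have hww := ww_near_uniform (m := m) j (i - 1)
              have hsp := spread_le (m := m) j
              have huw : uu m j (i - 1) = 2 ^ j * ww m j (i - 1) := by
                unfold ww; field_simp
              rw [huw]
              calc |2 ^ j * ww m j (i - 1) - 2 ^ j * (m:ℝ)⁻¹|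
                  = 2 ^ j * |ww m j (i - 1) - (m:ℝ)⁻¹| := by
                    rw [← mul_sub, abs_mul, abs_of_pos h2j]
              _ ≤ 2 ^ j * θ ^ (j / m) :=
                  mul_le_mul_of_nonneg_left (hww.trans hsp) h2j.le
            have hb : |(hcyc n k j : ℝ) * uu m j (i - 1) - (hcyc n k j : ℝ) * 2 ^ j * (m:ℝ)⁻¹|
                = (hcyc n k j : ℝ) * |uu m j (i - 1) - 2 ^ j * (m:ℝ)⁻¹| := by
              rw [mul_assoc, ← mul_sub, abs_mul, abs_of_nonneg (Nat.cast_nonneg _)]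
            rw [hb]
            calc (hcyc n k j : ℝ) * |uu m j (i - 1) - 2 ^ j * (m:ℝ)⁻¹|
                ≤ (hcyc n k j : ℝ) * (2 ^ j * θ ^ (j / m)) :=
                  mul_le_mul_of_nonneg_left ha (Nat.cast_nonneg _)
            _ ≤ (hcyc n k j : ℝ) * (2 ^ j * (θ⁻¹ * ρ ^ j)) := by
                refine mul_le_mul_of_nonneg_left ?_ (Nat.cast_nonneg _)
                exact mul_le_mul_of_nonneg_left
                  (theta_pow_div m j hm hθpos hρpos hρ1.le hρm) h2j.le
            _ = θ⁻¹ * ((hcyc n k j : ℝ) * 2 ^ j * ρ ^ j) := by ring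
            _ ≤ θ⁻¹ * (H k * ρ ^ (k / 2)) := by
                refine mul_le_mul_of_nonneg_left ?_ (by positivity)
                exact term_bound n k j hj' hρpos hρ1.le h2ρ
          calc ∑ j ∈ Finset.range (k + 1),
              |(hcyc n k j : ℝ) * uu m j (i - 1) - (hcyc n k j : ℝ) * 2 ^ j * (m:ℝ)⁻¹|
              ≤ ∑ _j ∈ Finset.range (k + 1), θ⁻¹ * (H k * ρ ^ (k / 2)) :=
                Finset.sum_le_sum hterm
          _ = (k + 1) * (θ⁻¹ * (H k * ρ ^ (k / 2))) := by
              rw [Finset.sum_const, Finset.card_range, nsmul_eq_mul]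
              push_cast
              ring
          _ = θ⁻¹ * (k + 1) * ρ ^ (k / 2) * H k := by ring
        linarith
      have hrw : (1 + H k)⁻¹ * lmC m n k i - (m:ℝ)⁻¹
          = (1 + H k)⁻¹ * (lmC m n k i - (1 + H k) * (m:ℝ)⁻¹) := by
        field_simp
      rw [hrw, abs_mul, abs_of_pos (inv_pos.mpr hσp)]
      calc (1 + H k)⁻¹ * |lmC m n k i - (1 + H k) * (m:ℝ)⁻¹|
          ≤ (1 + H k)⁻¹ * (1 + θ⁻¹ * (k + 1) * ρ ^ (k / 2) * H k) :=
            mul_le_mul_of_nonneg_left hmain (inv_pos.mpr hσp).le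
      _ ≤ ((1:ℝ)/2) ^ k + θ⁻¹ * (k + 1) * ρ ^ (k / 2) := by
          rw [mul_add]
          have hA : (1 + H k)⁻¹ * 1 ≤ ((1:ℝ)/2) ^ k := by
            rw [mul_one, div_pow, one_pow]
            have h2k : (0:ℝ) < 2 ^ k := by positivity
            rw [one_div]
            apply inv_anti₀ h2k
            have := hHk k
            linarith
          have hB : (1 + H k)⁻¹ * (θ⁻¹ * (k + 1) * ρ ^ (k / 2) * H k)
              ≤ θ⁻¹ * (k + 1) * ρ ^ (k / 2) := by
            have hfrac : (1 + H k)⁻¹ * H k ≤ 1 := by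
              rw [inv_mul_le_iff₀ hσp]
              linarith [hH0 k]
            calc (1 + H k)⁻¹ * (θ⁻¹ * (k + 1) * ρ ^ (k / 2) * H k)
                = (θ⁻¹ * (k + 1) * ρ ^ (k / 2)) * ((1 + H k)⁻¹ * H k) := by ring
            _ ≤ (θ⁻¹ * (k + 1) * ρ ^ (k / 2)) * 1 :=
                mul_le_mul_of_nonneg_left hfrac (by positivity)
            _ = θ⁻¹ * (k + 1) * ρ ^ (k / 2) := mul_one _
          linarith
    -- the bound tends to zero
    have hb0 : Filter.Tendsto
        (fun k : ℕ => ((1:ℝ)/2) ^ k + θ⁻¹ * (k + 1) * ρ ^ (k / 2))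
        Filter.atTop (nhds 0) := by
      have t1 : Filter.Tendsto (fun k : ℕ => ((1:ℝ)/2) ^ k) Filter.atTop (nhds 0) :=
        tendsto_pow_atTop_nhds_zero_of_lt_one (by norm_num) (by norm_num)
      set q : ℝ := Real.sqrt ρ with hqdef
      have hq0 : 0 < q := Real.sqrt_pos.mpr hρpos
      have hqsq : q ^ 2 = ρ := Real.sq_sqrt hρpos.le
      have hq1 : q < 1 := by
        nlinarith [hqsq, hq0]
      have t2 : Filter.Tendsto (fun k : ℕ => (k + 1 : ℝ) * q ^ k) Filter.atTop (nhds 0) := by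
        have ta : Filter.Tendsto (fun k : ℕ => (k:ℝ) ^ 1 * q ^ k) Filter.atTop (nhds 0) :=
          tendsto_pow_const_mul_const_pow_of_lt_one 1 hq0.le hq1
        have tb : Filter.Tendsto (fun k : ℕ => q ^ k) Filter.atTop (nhds 0) :=
          tendsto_pow_atTop_nhds_zero_of_lt_one hq0.le hq1
        have := ta.add tb
        rw [add_zero] at this
        refine this.congr fun k => ?_
        ring
      have t3 : Filter.Tendsto (fun k : ℕ => (k + 1 : ℝ) * ρ ^ (k / 2))
          Filter.atTop (nhds 0) := by
        have hb : ∀ k : ℕ, (k + 1 : ℝ) * ρ ^ (k / 2) ≤ q⁻¹ * ((k + 1 : ℝ) * q ^ k) := by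
          intro k
          have hρq : ρ ^ (k / 2) * q ≤ q ^ k := by
            have hle : k ≤ 2 * (k / 2) + 1 := by omega
            have h1 : q ^ (2 * (k / 2) + 1) ≤ q ^ k :=
              pow_le_pow_of_le_one hq0.le hq1.le hle
            have h2 : ρ ^ (k / 2) * q = q ^ (2 * (k / 2) + 1) := by
              rw [pow_succ, pow_mul, hqsq]
            rw [h2]
            exact h1
          have hk1 : (0:ℝ) ≤ (k + 1 : ℝ) := by positivity
          calc (k + 1 : ℝ) * ρ ^ (k / 2)
              = q⁻¹ * ((k + 1 : ℝ) * (ρ ^ (k / 2) * q)) := by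
                field_simp [hq0.ne']
          _ ≤ q⁻¹ * ((k + 1 : ℝ) * q ^ k) := by
              refine mul_le_mul_of_nonneg_left ?_ (by positivity)
              exact mul_le_mul_of_nonneg_left hρq hk1
        have hq' : Filter.Tendsto (fun k : ℕ => q⁻¹ * ((k + 1 : ℝ) * q ^ k))
            Filter.atTop (nhds 0) := by
          have := t2.const_mul q⁻¹
          rwa [mul_zero] at this
        refine squeeze_zero (fun k => by positivity) hb hq'
      have t4 := t3.const_mul θ⁻¹
      rw [mul_zero] at t4
      have := t1.add t4
      rw [add_zero] at this
      refine this.congr fun k => ?_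
      ring
    -- assemble
    rw [tendsto_pi_nhds]
    intro i
    have hcoord : ∀ k : ℕ, ((∑ i', lmC m n k i')⁻¹ • lmC m n k) i
        = (1 + H k)⁻¹ * lmC m n k i := by
      intro k
      rw [Pi.smul_apply, smul_eq_mul, hσ k]
    rw [show (fun k : ℕ => ((∑ i', lmC m n k i')⁻¹ • lmC m n k) i)
        = fun k : ℕ => (1 + H k)⁻¹ * lmC m n k i from funext hcoord]
    rw [tendsto_iff_norm_sub_tendsto_zero]
    refine squeeze_zero (fun k => norm_nonneg _) (fun k => ?_) hb0
    rw [Real.norm_eq_abs]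
    exact key k i
end
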